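/- Let f(t) = Σ_{m=0}^∞ φ(2^m t)/(m+1)² for t ∈ [0,1], where φ is the tent map. Then f has exactly two global maximizers on [0,1], located at t = 11/24 and t = 13/24. -/

import Mathlib

open MeasureTheory Filter Set

/-- The tent map: distance to the nearest integer. -/
noncomputable def phi (t : ℝ) : ℝ := ⨅ z : ℤ, |t - (z : ℝ)|

/-- A function in the Takagi class, for coefficient sequence `c`. -/
noncomputable def takagiF (c : ℕ → ℝ) (t : ℝ) : ℝ := ∑' m : ℕ, c m * phi (2 ^ m * t)

/-- `T(ρ) = Σ 2^{-(n+2)} (1 - ρ n)`. -/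
noncomputable def Trho (ρ : ℕ → ℝ) : ℝ := ∑' n : ℕ, (1 - ρ n) / 2 ^ (n + 2)

/-- A `{-1,+1}`-valued sequence. -/
def IsSign (ρ : ℕ → ℝ) : Prop := ∀ n, ρ n = 1 ∨ ρ n = -1

/-- `ρ` is a Rademacher expansion of `t`. -/
def IsRademacherExp (ρ : ℕ → ℝ) (t : ℝ) : Prop := IsSign ρ ∧ Trho ρ = t

/-- The step condition for coefficients `c`. -/
def StepCond (c : ℕ → ℝ) (ρ : ℕ → ℝ) : Prop :=
  ∀ n : ℕ, 1 ≤ n → ρ n * ∑ m ∈ Finset.range n, 2 ^ m * c m * ρ m ≤ 0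

noncomputable def sharpAux (c : ℕ → ℝ) : ℕ → ℝ × ℝ
  | 0 => (1, c 0)
  | n + 1 =>
    let S := (sharpAux c n).2
    let r : ℝ := if S ≤ 0 then 1 else -1
    (r, S + 2 ^ (n + 1) * c (n + 1) * r)

/-- The sequence `ρ♯` for coefficients `c`. -/
noncomputable def rhoSharp (c : ℕ → ℝ) (n : ℕ) : ℝ := (sharpAux c n).1

noncomputable def flatAux (c : ℕ → ℝ) : ℕ → ℝ × ℝ
  | 0 => (1, c 0)
  | n + 1 =>
    let S := (flatAux c n).2
    let r : ℝ := if S < 0 then 1 else -1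
    (r, S + 2 ^ (n + 1) * c (n + 1) * r)

/-- The sequence `ρ♭` for coefficients `c`. -/
noncomputable def rhoFlat (c : ℕ → ℝ) (n : ℕ) : ℝ := (flatAux c n).1

/-- The Takagi–Landsberg function with parameter `α`. -/
noncomputable def fTL (α : ℝ) (t : ℝ) : ℝ := ∑' m : ℕ, α ^ m / 2 ^ m * phi (2 ^ m * t)

noncomputable def sharpAuxTL (α : ℝ) : ℕ → ℝ × ℝ
  | 0 => (1, 1)
  | n + 1 =>
    let S := (sharpAuxTL α n).2
    let r : ℝ := if S ≤ 0 then 1 else -1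
    (r, S + α ^ (n + 1) * r)

/-- The sequence `ρ♯(α)` for the Takagi–Landsberg function. -/
noncomputable def rhoSharpTL (α : ℝ) (n : ℕ) : ℝ := (sharpAuxTL α n).1

noncomputable def flatAuxTL (α : ℝ) : ℕ → ℝ × ℝ
  | 0 => (1, 1)
  | n + 1 =>
    let S := (flatAuxTL α n).2
    let r : ℝ := if S < 0 then 1 else -1
    (r, S + α ^ (n + 1) * r)

/-- The sequence `ρ♭(α)` for the Takagi–Landsberg function. -/
noncomputable def rhoFlatTL (α : ℝ) (n : ℕ) : ℝ := (flatAuxTL α n).1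

/-- `τ♯(α) = T(ρ♯(α))`. -/
noncomputable def tauSharp (α : ℝ) : ℝ := Trho (rhoSharpTL α)

/-- `τ♭(α) = T(ρ♭(α))`. -/
noncomputable def tauFlat (α : ℝ) : ℝ := Trho (rhoFlatTL α)

/-- The Littlewood polynomial `p_{2n}(x) = 1 - x - x² - ⋯ - x^{2n}`. -/
noncomputable def p2n (n : ℕ) (x : ℝ) : ℝ := 1 - ∑ m ∈ Finset.Icc 1 (2 * n), x ^ m

set_option maxHeartbeats 1000000


lemma phi_bdd (t : ℝ) : BddBelow (Set.range fun z : ℤ => |t - (z : ℝ)|) :=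
  ⟨0, by rintro x ⟨z, rfl⟩; positivity⟩

lemma phi_eq (t : ℝ) : phi t = |t - round t| := by
  apply le_antisymm
  · exact ciInf_le (phi_bdd t) (round t)
  · apply le_ciInf
    intro z
    rcases eq_or_ne z (round t) with rfl | hz
    · exact le_refl _
    · have h1 : |t - round t| ≤ 1/2 := (abs_sub_round t)
      have h2 : (1 : ℝ) ≤ |(z : ℝ) - round t| := by
        have : z - round t ≠ 0 := sub_ne_zero.mpr (by exact_mod_cast hz)
        have := Int.one_le_abs (by exact_mod_cast this : z - round t ≠ 0)
        calc (1:ℝ) ≤ ((|z - round t| : ℤ) : ℝ) := by exact_mod_cast this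
        _ = |(z:ℝ) - round t| := by rw [Int.cast_abs]; push_cast; ring_nf
      have := abs_sub_abs_le_abs_sub ((z:ℝ) - round t) ((t:ℝ) - round t)
      have h3 : |(z:ℝ) - round t| - |t - (round t:ℝ)| ≤ |(z:ℝ) - t| := by
        calc _ ≤ |((z:ℝ) - round t) - (t - round t)| := this
        _ = |(z:ℝ) - t| := by ring_nf
      rw [abs_sub_comm t z]
      linarith






lemma phi_nonneg (t : ℝ) : 0 ≤ phi t := by rw [phi_eq]; positivity

lemma phi_le_half (t : ℝ) : phi t ≤ 1/2 := by
  rw [phi_eq]; simpa using abs_sub_round t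

lemma phi_add_int (x : ℝ) (n : ℤ) : phi (x + n) = phi x := by
  rw [phi_eq, phi_eq, round_add_intCast]
  push_cast
  ring_nf

lemma phi_neg (x : ℝ) : phi (-x) = phi x := by
  unfold phi
  rw [iInf, iInf]
  congr 1
  ext y
  constructor
  · rintro ⟨z, rfl⟩
    exact ⟨-z, by push_cast; rw [← abs_neg]; ring_nf⟩
  · rintro ⟨z, rfl⟩
    exact ⟨-z, by push_cast; rw [← abs_neg]; ring_nf⟩

lemma phi_eq_of_le (n : ℤ) {x : ℝ} (h1 : (n:ℝ) ≤ x) (h2 : x ≤ n + 1/2) :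
    phi x = x - n := by
  rcases lt_or_eq_of_le h2 with h | h
  · have hr : round x = n := by
      rw [round_eq]
      apply Int.floor_eq_iff.mpr
      constructor <;> push_cast <;> linarith
    rw [phi_eq, hr, abs_of_nonneg (by linarith)]
  · have hr : round x = n + 1 := by
      rw [round_eq]
      apply Int.floor_eq_iff.mpr
      constructor <;> push_cast <;> linarith
    rw [phi_eq, hr]
    push_cast
    rw [abs_of_nonpos (by linarith)]
    linarith

lemma phi_eq_of_ge (n : ℤ) {x : ℝ} (h1 : (n:ℝ) + 1/2 ≤ x) (h2 : x ≤ n + 1) :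
    phi x = (n:ℝ) + 1 - x := by
  have hr : round x = n + 1 := by
    rw [round_eq]
    apply Int.floor_eq_iff.mpr
    constructor <;> push_cast <;> linarith
  rw [phi_eq, hr]
  push_cast
  rw [abs_of_nonpos (by linarith)]
  ring



noncomputable def psi (x : ℝ) : ℝ := 1/2 - phi x - phi (2*x)/2
noncomputable def e (x : ℝ) : ℝ := min (phi (x - 1/3)) (phi (x + 1/3))
lemma psi_nonneg0 : ∀ y : ℝ, 0 ≤ y → y < 1 → 0 ≤ psi y := by
  intro y hy0 hy1
  unfold psi
  rcases le_or_gt y (1/4:ℝ) with hb0|hb0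
  · have hp1 : phi (y) = y - ((0:ℤ):ℝ) := phi_eq_of_le (0) (by push_cast; linarith only [hy0, hb0]) (by push_cast; linarith only [hy0, hb0])
    have hp2 : phi (2*y) = 2*y - ((0:ℤ):ℝ) := phi_eq_of_le (0) (by push_cast; linarith only [hy0, hb0]) (by push_cast; linarith only [hy0, hb0])
    rw [hp1, hp2]; push_cast; linarith only [hy0, hb0]
  rcases le_or_gt y (1/2:ℝ) with hb1|hb1
  · have hp1 : phi (y) = y - ((0:ℤ):ℝ) := phi_eq_of_le (0) (by push_cast; linarith only [hb0, hb1]) (by push_cast; linarith only [hb0, hb1])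
    have hp2 : phi (2*y) = ((0:ℤ):ℝ) + 1 - (2*y) := phi_eq_of_ge (0) (by push_cast; linarith only [hb0, hb1]) (by push_cast; linarith only [hb0, hb1])
    rw [hp1, hp2]; push_cast; linarith only [hb0, hb1]
  rcases le_or_gt y (3/4:ℝ) with hb2|hb2
  · have hp1 : phi (y) = ((0:ℤ):ℝ) + 1 - (y) := phi_eq_of_ge (0) (by push_cast; linarith only [hb1, hb2]) (by push_cast; linarith only [hb1, hb2])
    have hp2 : phi (2*y) = 2*y - ((1:ℤ):ℝ) := phi_eq_of_le (1) (by push_cast; linarith only [hb1, hb2]) (by push_cast; linarith only [hb1, hb2])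
    rw [hp1, hp2]; push_cast; linarith only [hb1, hb2]
  have hp1 : phi (y) = ((0:ℤ):ℝ) + 1 - (y) := phi_eq_of_ge (0) (by push_cast; linarith only [hb2, hy1]) (by push_cast; linarith only [hb2, hy1])
  have hp2 : phi (2*y) = ((1:ℤ):ℝ) + 1 - (2*y) := phi_eq_of_ge (1) (by push_cast; linarith only [hb2, hy1]) (by push_cast; linarith only [hb2, hy1])
  rw [hp1, hp2]; push_cast; linarith only [hb2, hy1]

lemma lambda1_0 : ∀ y : ℝ, 0 ≤ y → y < 1 → e y ≤ psi y + e (2*y) / 2 := by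
  intro y hy0 hy1
  unfold e psi
  rcases le_or_gt y (1/12:ℝ) with hb0|hb0
  · have hA1 : phi (y - (1/3:ℝ)) = ((-1:ℤ):ℝ) + 1 - (y - (1/3:ℝ)) := phi_eq_of_ge (-1) (by push_cast; linarith only [hy0, hb0]) (by push_cast; linarith only [hy0, hb0])
    have hA2 : phi (y + (1/3:ℝ)) = y + (1/3:ℝ) - ((0:ℤ):ℝ) := phi_eq_of_le (0) (by push_cast; linarith only [hy0, hb0]) (by push_cast; linarith only [hy0, hb0])
    have hB1 : phi (y) = y - ((0:ℤ):ℝ) := phi_eq_of_le (0) (by push_cast; linarith only [hy0, hb0]) (by push_cast; linarith only [hy0, hb0])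
    have hB2 : phi (2*y) = 2*y - ((0:ℤ):ℝ) := phi_eq_of_le (0) (by push_cast; linarith only [hy0, hb0]) (by push_cast; linarith only [hy0, hb0])
    have hC1 : phi (2*y - (1/3:ℝ)) = ((-1:ℤ):ℝ) + 1 - (2*y - (1/3:ℝ)) := phi_eq_of_ge (-1) (by push_cast; linarith only [hy0, hb0]) (by push_cast; linarith only [hy0, hb0])
    have hC2 : phi (2*y + (1/3:ℝ)) = 2*y + (1/3:ℝ) - ((0:ℤ):ℝ) := phi_eq_of_le (0) (by push_cast; linarith only [hy0, hb0]) (by push_cast; linarith only [hy0, hb0])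
    have hC : ((1/3:ℝ) + (-2:ℝ)*y) ≤ min (phi (2*y - (1/3:ℝ))) (phi (2*y + (1/3:ℝ))) := le_min (by rw [hC1]; push_cast; linarith only [hy0, hb0]) (by rw [hC2]; push_cast; linarith only [hy0, hb0])
    have hA := (min_le_left (phi (y - (1/3:ℝ))) (phi (y + (1/3:ℝ)))).trans (le_of_eq hA1)
    rw [hB1, hB2]; push_cast at hA hC ⊢; linarith only [hA, hC, hy0, hb0]
  rcases le_or_gt y (1/6:ℝ) with hb1|hb1
  · have hA1 : phi (y - (1/3:ℝ)) = ((-1:ℤ):ℝ) + 1 - (y - (1/3:ℝ)) := phi_eq_of_ge (-1) (by push_cast; linarith only [hb0, hb1]) (by push_cast; linarith only [hb0, hb1])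
    have hA2 : phi (y + (1/3:ℝ)) = y + (1/3:ℝ) - ((0:ℤ):ℝ) := phi_eq_of_le (0) (by push_cast; linarith only [hb0, hb1]) (by push_cast; linarith only [hb0, hb1])
    have hB1 : phi (y) = y - ((0:ℤ):ℝ) := phi_eq_of_le (0) (by push_cast; linarith only [hb0, hb1]) (by push_cast; linarith only [hb0, hb1])
    have hB2 : phi (2*y) = 2*y - ((0:ℤ):ℝ) := phi_eq_of_le (0) (by push_cast; linarith only [hb0, hb1]) (by push_cast; linarith only [hb0, hb1])
    have hC1 : phi (2*y - (1/3:ℝ)) = ((-1:ℤ):ℝ) + 1 - (2*y - (1/3:ℝ)) := phi_eq_of_ge (-1) (by push_cast; linarith only [hb0, hb1]) (by push_cast; linarith only [hb0, hb1])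
    have hC2 : phi (2*y + (1/3:ℝ)) = ((0:ℤ):ℝ) + 1 - (2*y + (1/3:ℝ)) := phi_eq_of_ge (0) (by push_cast; linarith only [hb0, hb1]) (by push_cast; linarith only [hb0, hb1])
    have hC : ((1/3:ℝ) + (-2:ℝ)*y) ≤ min (phi (2*y - (1/3:ℝ))) (phi (2*y + (1/3:ℝ))) := le_min (by rw [hC1]; push_cast; linarith only [hb0, hb1]) (by rw [hC2]; push_cast; linarith only [hb0, hb1])
    have hA := (min_le_left (phi (y - (1/3:ℝ))) (phi (y + (1/3:ℝ)))).trans (le_of_eq hA1)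
    rw [hB1, hB2]; push_cast at hA hC ⊢; linarith only [hA, hC, hb0, hb1]
  rcases le_or_gt y (1/4:ℝ) with hb2|hb2
  · have hA1 : phi (y - (1/3:ℝ)) = ((-1:ℤ):ℝ) + 1 - (y - (1/3:ℝ)) := phi_eq_of_ge (-1) (by push_cast; linarith only [hb1, hb2]) (by push_cast; linarith only [hb1, hb2])
    have hA2 : phi (y + (1/3:ℝ)) = ((0:ℤ):ℝ) + 1 - (y + (1/3:ℝ)) := phi_eq_of_ge (0) (by push_cast; linarith only [hb1, hb2]) (by push_cast; linarith only [hb1, hb2])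
    have hB1 : phi (y) = y - ((0:ℤ):ℝ) := phi_eq_of_le (0) (by push_cast; linarith only [hb1, hb2]) (by push_cast; linarith only [hb1, hb2])
    have hB2 : phi (2*y) = 2*y - ((0:ℤ):ℝ) := phi_eq_of_le (0) (by push_cast; linarith only [hb1, hb2]) (by push_cast; linarith only [hb1, hb2])
    have hC1 : phi (2*y - (1/3:ℝ)) = 2*y - (1/3:ℝ) - ((0:ℤ):ℝ) := phi_eq_of_le (0) (by push_cast; linarith only [hb1, hb2]) (by push_cast; linarith only [hb1, hb2])
    have hC2 : phi (2*y + (1/3:ℝ)) = ((0:ℤ):ℝ) + 1 - (2*y + (1/3:ℝ)) := phi_eq_of_ge (0) (by push_cast; linarith only [hb1, hb2]) (by push_cast; linarith only [hb1, hb2])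
    have hC : ((-(1/3:ℝ)) + 2*y) ≤ min (phi (2*y - (1/3:ℝ))) (phi (2*y + (1/3:ℝ))) := le_min (by rw [hC1]; push_cast; linarith only [hb1, hb2]) (by rw [hC2]; push_cast; linarith only [hb1, hb2])
    have hA := (min_le_left (phi (y - (1/3:ℝ))) (phi (y + (1/3:ℝ)))).trans (le_of_eq hA1)
    rw [hB1, hB2]; push_cast at hA hC ⊢; linarith only [hA, hC, hb1, hb2]
  rcases le_or_gt y (1/3:ℝ) with hb3|hb3
  · have hA1 : phi (y - (1/3:ℝ)) = ((-1:ℤ):ℝ) + 1 - (y - (1/3:ℝ)) := phi_eq_of_ge (-1) (by push_cast; linarith only [hb2, hb3]) (by push_cast; linarith only [hb2, hb3])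
    have hA2 : phi (y + (1/3:ℝ)) = ((0:ℤ):ℝ) + 1 - (y + (1/3:ℝ)) := phi_eq_of_ge (0) (by push_cast; linarith only [hb2, hb3]) (by push_cast; linarith only [hb2, hb3])
    have hB1 : phi (y) = y - ((0:ℤ):ℝ) := phi_eq_of_le (0) (by push_cast; linarith only [hb2, hb3]) (by push_cast; linarith only [hb2, hb3])
    have hB2 : phi (2*y) = ((0:ℤ):ℝ) + 1 - (2*y) := phi_eq_of_ge (0) (by push_cast; linarith only [hb2, hb3]) (by push_cast; linarith only [hb2, hb3])
    have hC1 : phi (2*y - (1/3:ℝ)) = 2*y - (1/3:ℝ) - ((0:ℤ):ℝ) := phi_eq_of_le (0) (by push_cast; linarith only [hb2, hb3]) (by push_cast; linarith only [hb2, hb3])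
    have hC2 : phi (2*y + (1/3:ℝ)) = ((0:ℤ):ℝ) + 1 - (2*y + (1/3:ℝ)) := phi_eq_of_ge (0) (by push_cast; linarith only [hb2, hb3]) (by push_cast; linarith only [hb2, hb3])
    have hC : ((2/3:ℝ) + (-2:ℝ)*y) ≤ min (phi (2*y - (1/3:ℝ))) (phi (2*y + (1/3:ℝ))) := le_min (by rw [hC1]; push_cast; linarith only [hb2, hb3]) (by rw [hC2]; push_cast; linarith only [hb2, hb3])
    have hA := (min_le_left (phi (y - (1/3:ℝ))) (phi (y + (1/3:ℝ)))).trans (le_of_eq hA1)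
    rw [hB1, hB2]; push_cast at hA hC ⊢; linarith only [hA, hC, hb2, hb3]
  rcases le_or_gt y (5/12:ℝ) with hb4|hb4
  · have hA1 : phi (y - (1/3:ℝ)) = y - (1/3:ℝ) - ((0:ℤ):ℝ) := phi_eq_of_le (0) (by push_cast; linarith only [hb3, hb4]) (by push_cast; linarith only [hb3, hb4])
    have hA2 : phi (y + (1/3:ℝ)) = ((0:ℤ):ℝ) + 1 - (y + (1/3:ℝ)) := phi_eq_of_ge (0) (by push_cast; linarith only [hb3, hb4]) (by push_cast; linarith only [hb3, hb4])
    have hB1 : phi (y) = y - ((0:ℤ):ℝ) := phi_eq_of_le (0) (by push_cast; linarith only [hb3, hb4]) (by push_cast; linarith only [hb3, hb4])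
    have hB2 : phi (2*y) = ((0:ℤ):ℝ) + 1 - (2*y) := phi_eq_of_ge (0) (by push_cast; linarith only [hb3, hb4]) (by push_cast; linarith only [hb3, hb4])
    have hC1 : phi (2*y - (1/3:ℝ)) = 2*y - (1/3:ℝ) - ((0:ℤ):ℝ) := phi_eq_of_le (0) (by push_cast; linarith only [hb3, hb4]) (by push_cast; linarith only [hb3, hb4])
    have hC2 : phi (2*y + (1/3:ℝ)) = 2*y + (1/3:ℝ) - ((1:ℤ):ℝ) := phi_eq_of_le (1) (by push_cast; linarith only [hb3, hb4]) (by push_cast; linarith only [hb3, hb4])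
    have hC : ((-(2/3:ℝ)) + 2*y) ≤ min (phi (2*y - (1/3:ℝ))) (phi (2*y + (1/3:ℝ))) := le_min (by rw [hC1]; push_cast; linarith only [hb3, hb4]) (by rw [hC2]; push_cast; linarith only [hb3, hb4])
    have hA := (min_le_left (phi (y - (1/3:ℝ))) (phi (y + (1/3:ℝ)))).trans (le_of_eq hA1)
    rw [hB1, hB2]; push_cast at hA hC ⊢; linarith only [hA, hC, hb3, hb4]
  rcases le_or_gt y (1/2:ℝ) with hb5|hb5
  · have hA1 : phi (y - (1/3:ℝ)) = y - (1/3:ℝ) - ((0:ℤ):ℝ) := phi_eq_of_le (0) (by push_cast; linarith only [hb4, hb5]) (by push_cast; linarith only [hb4, hb5])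
    have hA2 : phi (y + (1/3:ℝ)) = ((0:ℤ):ℝ) + 1 - (y + (1/3:ℝ)) := phi_eq_of_ge (0) (by push_cast; linarith only [hb4, hb5]) (by push_cast; linarith only [hb4, hb5])
    have hB1 : phi (y) = y - ((0:ℤ):ℝ) := phi_eq_of_le (0) (by push_cast; linarith only [hb4, hb5]) (by push_cast; linarith only [hb4, hb5])
    have hB2 : phi (2*y) = ((0:ℤ):ℝ) + 1 - (2*y) := phi_eq_of_ge (0) (by push_cast; linarith only [hb4, hb5]) (by push_cast; linarith only [hb4, hb5])
    have hC1 : phi (2*y - (1/3:ℝ)) = ((0:ℤ):ℝ) + 1 - (2*y - (1/3:ℝ)) := phi_eq_of_ge (0) (by push_cast; linarith only [hb4, hb5]) (by push_cast; linarith only [hb4, hb5])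
    have hC2 : phi (2*y + (1/3:ℝ)) = 2*y + (1/3:ℝ) - ((1:ℤ):ℝ) := phi_eq_of_le (1) (by push_cast; linarith only [hb4, hb5]) (by push_cast; linarith only [hb4, hb5])
    have hC : ((-(2/3:ℝ)) + 2*y) ≤ min (phi (2*y - (1/3:ℝ))) (phi (2*y + (1/3:ℝ))) := le_min (by rw [hC1]; push_cast; linarith only [hb4, hb5]) (by rw [hC2]; push_cast; linarith only [hb4, hb5])
    have hA := (min_le_left (phi (y - (1/3:ℝ))) (phi (y + (1/3:ℝ)))).trans (le_of_eq hA1)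
    rw [hB1, hB2]; push_cast at hA hC ⊢; linarith only [hA, hC, hb4, hb5]
  rcases le_or_gt y (7/12:ℝ) with hb6|hb6
  · have hA1 : phi (y - (1/3:ℝ)) = y - (1/3:ℝ) - ((0:ℤ):ℝ) := phi_eq_of_le (0) (by push_cast; linarith only [hb5, hb6]) (by push_cast; linarith only [hb5, hb6])
    have hA2 : phi (y + (1/3:ℝ)) = ((0:ℤ):ℝ) + 1 - (y + (1/3:ℝ)) := phi_eq_of_ge (0) (by push_cast; linarith only [hb5, hb6]) (by push_cast; linarith only [hb5, hb6])
    have hB1 : phi (y) = ((0:ℤ):ℝ) + 1 - (y) := phi_eq_of_ge (0) (by push_cast; linarith only [hb5, hb6]) (by push_cast; linarith only [hb5, hb6])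
    have hB2 : phi (2*y) = 2*y - ((1:ℤ):ℝ) := phi_eq_of_le (1) (by push_cast; linarith only [hb5, hb6]) (by push_cast; linarith only [hb5, hb6])
    have hC1 : phi (2*y - (1/3:ℝ)) = ((0:ℤ):ℝ) + 1 - (2*y - (1/3:ℝ)) := phi_eq_of_ge (0) (by push_cast; linarith only [hb5, hb6]) (by push_cast; linarith only [hb5, hb6])
    have hC2 : phi (2*y + (1/3:ℝ)) = 2*y + (1/3:ℝ) - ((1:ℤ):ℝ) := phi_eq_of_le (1) (by push_cast; linarith only [hb5, hb6]) (by push_cast; linarith only [hb5, hb6])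
    have hC : ((4/3:ℝ) + (-2:ℝ)*y) ≤ min (phi (2*y - (1/3:ℝ))) (phi (2*y + (1/3:ℝ))) := le_min (by rw [hC1]; push_cast; linarith only [hb5, hb6]) (by rw [hC2]; push_cast; linarith only [hb5, hb6])
    have hA := (min_le_right (phi (y - (1/3:ℝ))) (phi (y + (1/3:ℝ)))).trans (le_of_eq hA2)
    rw [hB1, hB2]; push_cast at hA hC ⊢; linarith only [hA, hC, hb5, hb6]
  rcases le_or_gt y (2/3:ℝ) with hb7|hb7
  · have hA1 : phi (y - (1/3:ℝ)) = y - (1/3:ℝ) - ((0:ℤ):ℝ) := phi_eq_of_le (0) (by push_cast; linarith only [hb6, hb7]) (by push_cast; linarith only [hb6, hb7])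
    have hA2 : phi (y + (1/3:ℝ)) = ((0:ℤ):ℝ) + 1 - (y + (1/3:ℝ)) := phi_eq_of_ge (0) (by push_cast; linarith only [hb6, hb7]) (by push_cast; linarith only [hb6, hb7])
    have hB1 : phi (y) = ((0:ℤ):ℝ) + 1 - (y) := phi_eq_of_ge (0) (by push_cast; linarith only [hb6, hb7]) (by push_cast; linarith only [hb6, hb7])
    have hB2 : phi (2*y) = 2*y - ((1:ℤ):ℝ) := phi_eq_of_le (1) (by push_cast; linarith only [hb6, hb7]) (by push_cast; linarith only [hb6, hb7])
    have hC1 : phi (2*y - (1/3:ℝ)) = ((0:ℤ):ℝ) + 1 - (2*y - (1/3:ℝ)) := phi_eq_of_ge (0) (by push_cast; linarith only [hb6, hb7]) (by push_cast; linarith only [hb6, hb7])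
    have hC2 : phi (2*y + (1/3:ℝ)) = ((1:ℤ):ℝ) + 1 - (2*y + (1/3:ℝ)) := phi_eq_of_ge (1) (by push_cast; linarith only [hb6, hb7]) (by push_cast; linarith only [hb6, hb7])
    have hC : ((4/3:ℝ) + (-2:ℝ)*y) ≤ min (phi (2*y - (1/3:ℝ))) (phi (2*y + (1/3:ℝ))) := le_min (by rw [hC1]; push_cast; linarith only [hb6, hb7]) (by rw [hC2]; push_cast; linarith only [hb6, hb7])
    have hA := (min_le_right (phi (y - (1/3:ℝ))) (phi (y + (1/3:ℝ)))).trans (le_of_eq hA2)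
    rw [hB1, hB2]; push_cast at hA hC ⊢; linarith only [hA, hC, hb6, hb7]
  rcases le_or_gt y (3/4:ℝ) with hb8|hb8
  · have hA1 : phi (y - (1/3:ℝ)) = y - (1/3:ℝ) - ((0:ℤ):ℝ) := phi_eq_of_le (0) (by push_cast; linarith only [hb7, hb8]) (by push_cast; linarith only [hb7, hb8])
    have hA2 : phi (y + (1/3:ℝ)) = y + (1/3:ℝ) - ((1:ℤ):ℝ) := phi_eq_of_le (1) (by push_cast; linarith only [hb7, hb8]) (by push_cast; linarith only [hb7, hb8])
    have hB1 : phi (y) = ((0:ℤ):ℝ) + 1 - (y) := phi_eq_of_ge (0) (by push_cast; linarith only [hb7, hb8]) (by push_cast; linarith only [hb7, hb8])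
    have hB2 : phi (2*y) = 2*y - ((1:ℤ):ℝ) := phi_eq_of_le (1) (by push_cast; linarith only [hb7, hb8]) (by push_cast; linarith only [hb7, hb8])
    have hC1 : phi (2*y - (1/3:ℝ)) = 2*y - (1/3:ℝ) - ((1:ℤ):ℝ) := phi_eq_of_le (1) (by push_cast; linarith only [hb7, hb8]) (by push_cast; linarith only [hb7, hb8])
    have hC2 : phi (2*y + (1/3:ℝ)) = ((1:ℤ):ℝ) + 1 - (2*y + (1/3:ℝ)) := phi_eq_of_ge (1) (by push_cast; linarith only [hb7, hb8]) (by push_cast; linarith only [hb7, hb8])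
    have hC : ((-(4/3:ℝ)) + 2*y) ≤ min (phi (2*y - (1/3:ℝ))) (phi (2*y + (1/3:ℝ))) := le_min (by rw [hC1]; push_cast; linarith only [hb7, hb8]) (by rw [hC2]; push_cast; linarith only [hb7, hb8])
    have hA := (min_le_right (phi (y - (1/3:ℝ))) (phi (y + (1/3:ℝ)))).trans (le_of_eq hA2)
    rw [hB1, hB2]; push_cast at hA hC ⊢; linarith only [hA, hC, hb7, hb8]
  rcases le_or_gt y (5/6:ℝ) with hb9|hb9
  · have hA1 : phi (y - (1/3:ℝ)) = y - (1/3:ℝ) - ((0:ℤ):ℝ) := phi_eq_of_le (0) (by push_cast; linarith only [hb8, hb9]) (by push_cast; linarith only [hb8, hb9])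
    have hA2 : phi (y + (1/3:ℝ)) = y + (1/3:ℝ) - ((1:ℤ):ℝ) := phi_eq_of_le (1) (by push_cast; linarith only [hb8, hb9]) (by push_cast; linarith only [hb8, hb9])
    have hB1 : phi (y) = ((0:ℤ):ℝ) + 1 - (y) := phi_eq_of_ge (0) (by push_cast; linarith only [hb8, hb9]) (by push_cast; linarith only [hb8, hb9])
    have hB2 : phi (2*y) = ((1:ℤ):ℝ) + 1 - (2*y) := phi_eq_of_ge (1) (by push_cast; linarith only [hb8, hb9]) (by push_cast; linarith only [hb8, hb9])
    have hC1 : phi (2*y - (1/3:ℝ)) = 2*y - (1/3:ℝ) - ((1:ℤ):ℝ) := phi_eq_of_le (1) (by push_cast; linarith only [hb8, hb9]) (by push_cast; linarith only [hb8, hb9])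
    have hC2 : phi (2*y + (1/3:ℝ)) = ((1:ℤ):ℝ) + 1 - (2*y + (1/3:ℝ)) := phi_eq_of_ge (1) (by push_cast; linarith only [hb8, hb9]) (by push_cast; linarith only [hb8, hb9])
    have hC : ((5/3:ℝ) + (-2:ℝ)*y) ≤ min (phi (2*y - (1/3:ℝ))) (phi (2*y + (1/3:ℝ))) := le_min (by rw [hC1]; push_cast; linarith only [hb8, hb9]) (by rw [hC2]; push_cast; linarith only [hb8, hb9])
    have hA := (min_le_right (phi (y - (1/3:ℝ))) (phi (y + (1/3:ℝ)))).trans (le_of_eq hA2)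
    rw [hB1, hB2]; push_cast at hA hC ⊢; linarith only [hA, hC, hb8, hb9]
  rcases le_or_gt y (11/12:ℝ) with hb10|hb10
  · have hA1 : phi (y - (1/3:ℝ)) = ((0:ℤ):ℝ) + 1 - (y - (1/3:ℝ)) := phi_eq_of_ge (0) (by push_cast; linarith only [hb9, hb10]) (by push_cast; linarith only [hb9, hb10])
    have hA2 : phi (y + (1/3:ℝ)) = y + (1/3:ℝ) - ((1:ℤ):ℝ) := phi_eq_of_le (1) (by push_cast; linarith only [hb9, hb10]) (by push_cast; linarith only [hb9, hb10])
    have hB1 : phi (y) = ((0:ℤ):ℝ) + 1 - (y) := phi_eq_of_ge (0) (by push_cast; linarith only [hb9, hb10]) (by push_cast; linarith only [hb9, hb10])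
    have hB2 : phi (2*y) = ((1:ℤ):ℝ) + 1 - (2*y) := phi_eq_of_ge (1) (by push_cast; linarith only [hb9, hb10]) (by push_cast; linarith only [hb9, hb10])
    have hC1 : phi (2*y - (1/3:ℝ)) = 2*y - (1/3:ℝ) - ((1:ℤ):ℝ) := phi_eq_of_le (1) (by push_cast; linarith only [hb9, hb10]) (by push_cast; linarith only [hb9, hb10])
    have hC2 : phi (2*y + (1/3:ℝ)) = 2*y + (1/3:ℝ) - ((2:ℤ):ℝ) := phi_eq_of_le (2) (by push_cast; linarith only [hb9, hb10]) (by push_cast; linarith only [hb9, hb10])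
    have hC : ((-(5/3:ℝ)) + 2*y) ≤ min (phi (2*y - (1/3:ℝ))) (phi (2*y + (1/3:ℝ))) := le_min (by rw [hC1]; push_cast; linarith only [hb9, hb10]) (by rw [hC2]; push_cast; linarith only [hb9, hb10])
    have hA := (min_le_right (phi (y - (1/3:ℝ))) (phi (y + (1/3:ℝ)))).trans (le_of_eq hA2)
    rw [hB1, hB2]; push_cast at hA hC ⊢; linarith only [hA, hC, hb9, hb10]
  have hA1 : phi (y - (1/3:ℝ)) = ((0:ℤ):ℝ) + 1 - (y - (1/3:ℝ)) := phi_eq_of_ge (0) (by push_cast; linarith only [hb10, hy1]) (by push_cast; linarith only [hb10, hy1])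
  have hA2 : phi (y + (1/3:ℝ)) = y + (1/3:ℝ) - ((1:ℤ):ℝ) := phi_eq_of_le (1) (by push_cast; linarith only [hb10, hy1]) (by push_cast; linarith only [hb10, hy1])
  have hB1 : phi (y) = ((0:ℤ):ℝ) + 1 - (y) := phi_eq_of_ge (0) (by push_cast; linarith only [hb10, hy1]) (by push_cast; linarith only [hb10, hy1])
  have hB2 : phi (2*y) = ((1:ℤ):ℝ) + 1 - (2*y) := phi_eq_of_ge (1) (by push_cast; linarith only [hb10, hy1]) (by push_cast; linarith only [hb10, hy1])
  have hC1 : phi (2*y - (1/3:ℝ)) = ((1:ℤ):ℝ) + 1 - (2*y - (1/3:ℝ)) := phi_eq_of_ge (1) (by push_cast; linarith only [hb10, hy1]) (by push_cast; linarith only [hb10, hy1])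
  have hC2 : phi (2*y + (1/3:ℝ)) = 2*y + (1/3:ℝ) - ((2:ℤ):ℝ) := phi_eq_of_le (2) (by push_cast; linarith only [hb10, hy1]) (by push_cast; linarith only [hb10, hy1])
  have hC : ((-(5/3:ℝ)) + 2*y) ≤ min (phi (2*y - (1/3:ℝ))) (phi (2*y + (1/3:ℝ))) := le_min (by rw [hC1]; push_cast; linarith only [hb10, hy1]) (by rw [hC2]; push_cast; linarith only [hb10, hy1])
  have hA := (min_le_right (phi (y - (1/3:ℝ))) (phi (y + (1/3:ℝ)))).trans (le_of_eq hA2)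
  rw [hB1, hB2]; push_cast at hA hC ⊢; linarith only [hA, hC, hb10, hy1]

lemma theta_lt : ∀ t : ℝ, 0 ≤ t → t ≤ 1/2 → t ≠ 11/24 →
    phi t + phi (2*t)/4 + phi (4*t)/9 - (7/400) * min (phi (8*t - (1/3:ℝ))) (phi (8*t + (1/3:ℝ))) < 215/432 := by
  intro t ht0 ht1 hne
  rcases le_or_gt t (1/48:ℝ) with hb0|hb0
  · have h1 : phi (t) = t - ((0:ℤ):ℝ) := phi_eq_of_le (0) (by push_cast; linarith only [ht0, hb0]) (by push_cast; linarith only [ht0, hb0])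
    have h2 : phi (2*t) = 2*t - ((0:ℤ):ℝ) := phi_eq_of_le (0) (by push_cast; linarith only [ht0, hb0]) (by push_cast; linarith only [ht0, hb0])
    have h4 : phi (4*t) = 4*t - ((0:ℤ):ℝ) := phi_eq_of_le (0) (by push_cast; linarith only [ht0, hb0]) (by push_cast; linarith only [ht0, hb0])
    have hE1 : phi (8*t - (1/3:ℝ)) = ((-1:ℤ):ℝ) + 1 - (8*t - (1/3:ℝ)) := phi_eq_of_ge (-1) (by push_cast; linarith only [ht0, hb0]) (by push_cast; linarith only [ht0, hb0])
    have hE2 : phi (8*t + (1/3:ℝ)) = 8*t + (1/3:ℝ) - ((0:ℤ):ℝ) := phi_eq_of_le (0) (by push_cast; linarith only [ht0, hb0]) (by push_cast; linarith only [ht0, hb0])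
    have hE : ((1/3:ℝ) + (-8:ℝ)*t) ≤ min (phi (8*t - (1/3:ℝ))) (phi (8*t + (1/3:ℝ))) := le_min (by rw [hE1]; push_cast; linarith only [ht0, hb0]) (by rw [hE2]; push_cast; linarith only [ht0, hb0])
    rw [h1, h2, h4]; push_cast at hE ⊢; linarith only [hE, ht0, hb0]
  rcases le_or_gt t (1/24:ℝ) with hb1|hb1
  · have h1 : phi (t) = t - ((0:ℤ):ℝ) := phi_eq_of_le (0) (by push_cast; linarith only [hb0, hb1]) (by push_cast; linarith only [hb0, hb1])
    have h2 : phi (2*t) = 2*t - ((0:ℤ):ℝ) := phi_eq_of_le (0) (by push_cast; linarith only [hb0, hb1]) (by push_cast; linarith only [hb0, hb1])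
    have h4 : phi (4*t) = 4*t - ((0:ℤ):ℝ) := phi_eq_of_le (0) (by push_cast; linarith only [hb0, hb1]) (by push_cast; linarith only [hb0, hb1])
    have hE1 : phi (8*t - (1/3:ℝ)) = ((-1:ℤ):ℝ) + 1 - (8*t - (1/3:ℝ)) := phi_eq_of_ge (-1) (by push_cast; linarith only [hb0, hb1]) (by push_cast; linarith only [hb0, hb1])
    have hE2 : phi (8*t + (1/3:ℝ)) = ((0:ℤ):ℝ) + 1 - (8*t + (1/3:ℝ)) := phi_eq_of_ge (0) (by push_cast; linarith only [hb0, hb1]) (by push_cast; linarith only [hb0, hb1])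
    have hE : ((1/3:ℝ) + (-8:ℝ)*t) ≤ min (phi (8*t - (1/3:ℝ))) (phi (8*t + (1/3:ℝ))) := le_min (by rw [hE1]; push_cast; linarith only [hb0, hb1]) (by rw [hE2]; push_cast; linarith only [hb0, hb1])
    rw [h1, h2, h4]; push_cast at hE ⊢; linarith only [hE, hb0, hb1]
  rcases le_or_gt t (1/16:ℝ) with hb2|hb2
  · have h1 : phi (t) = t - ((0:ℤ):ℝ) := phi_eq_of_le (0) (by push_cast; linarith only [hb1, hb2]) (by push_cast; linarith only [hb1, hb2])
    have h2 : phi (2*t) = 2*t - ((0:ℤ):ℝ) := phi_eq_of_le (0) (by push_cast; linarith only [hb1, hb2]) (by push_cast; linarith only [hb1, hb2])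
    have h4 : phi (4*t) = 4*t - ((0:ℤ):ℝ) := phi_eq_of_le (0) (by push_cast; linarith only [hb1, hb2]) (by push_cast; linarith only [hb1, hb2])
    have hE1 : phi (8*t - (1/3:ℝ)) = 8*t - (1/3:ℝ) - ((0:ℤ):ℝ) := phi_eq_of_le (0) (by push_cast; linarith only [hb1, hb2]) (by push_cast; linarith only [hb1, hb2])
    have hE2 : phi (8*t + (1/3:ℝ)) = ((0:ℤ):ℝ) + 1 - (8*t + (1/3:ℝ)) := phi_eq_of_ge (0) (by push_cast; linarith only [hb1, hb2]) (by push_cast; linarith only [hb1, hb2])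
    have hE : ((-(1/3:ℝ)) + 8*t) ≤ min (phi (8*t - (1/3:ℝ))) (phi (8*t + (1/3:ℝ))) := le_min (by rw [hE1]; push_cast; linarith only [hb1, hb2]) (by rw [hE2]; push_cast; linarith only [hb1, hb2])
    rw [h1, h2, h4]; push_cast at hE ⊢; linarith only [hE, hb1, hb2]
  rcases le_or_gt t (1/12:ℝ) with hb3|hb3
  · have h1 : phi (t) = t - ((0:ℤ):ℝ) := phi_eq_of_le (0) (by push_cast; linarith only [hb2, hb3]) (by push_cast; linarith only [hb2, hb3])
    have h2 : phi (2*t) = 2*t - ((0:ℤ):ℝ) := phi_eq_of_le (0) (by push_cast; linarith only [hb2, hb3]) (by push_cast; linarith only [hb2, hb3])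
    have h4 : phi (4*t) = 4*t - ((0:ℤ):ℝ) := phi_eq_of_le (0) (by push_cast; linarith only [hb2, hb3]) (by push_cast; linarith only [hb2, hb3])
    have hE1 : phi (8*t - (1/3:ℝ)) = 8*t - (1/3:ℝ) - ((0:ℤ):ℝ) := phi_eq_of_le (0) (by push_cast; linarith only [hb2, hb3]) (by push_cast; linarith only [hb2, hb3])
    have hE2 : phi (8*t + (1/3:ℝ)) = ((0:ℤ):ℝ) + 1 - (8*t + (1/3:ℝ)) := phi_eq_of_ge (0) (by push_cast; linarith only [hb2, hb3]) (by push_cast; linarith only [hb2, hb3])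
    have hE : ((2/3:ℝ) + (-8:ℝ)*t) ≤ min (phi (8*t - (1/3:ℝ))) (phi (8*t + (1/3:ℝ))) := le_min (by rw [hE1]; push_cast; linarith only [hb2, hb3]) (by rw [hE2]; push_cast; linarith only [hb2, hb3])
    rw [h1, h2, h4]; push_cast at hE ⊢; linarith only [hE, hb2, hb3]
  rcases le_or_gt t (5/48:ℝ) with hb4|hb4
  · have h1 : phi (t) = t - ((0:ℤ):ℝ) := phi_eq_of_le (0) (by push_cast; linarith only [hb3, hb4]) (by push_cast; linarith only [hb3, hb4])
    have h2 : phi (2*t) = 2*t - ((0:ℤ):ℝ) := phi_eq_of_le (0) (by push_cast; linarith only [hb3, hb4]) (by push_cast; linarith only [hb3, hb4])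
    have h4 : phi (4*t) = 4*t - ((0:ℤ):ℝ) := phi_eq_of_le (0) (by push_cast; linarith only [hb3, hb4]) (by push_cast; linarith only [hb3, hb4])
    have hE1 : phi (8*t - (1/3:ℝ)) = 8*t - (1/3:ℝ) - ((0:ℤ):ℝ) := phi_eq_of_le (0) (by push_cast; linarith only [hb3, hb4]) (by push_cast; linarith only [hb3, hb4])
    have hE2 : phi (8*t + (1/3:ℝ)) = 8*t + (1/3:ℝ) - ((1:ℤ):ℝ) := phi_eq_of_le (1) (by push_cast; linarith only [hb3, hb4]) (by push_cast; linarith only [hb3, hb4])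
    have hE : ((-(2/3:ℝ)) + 8*t) ≤ min (phi (8*t - (1/3:ℝ))) (phi (8*t + (1/3:ℝ))) := le_min (by rw [hE1]; push_cast; linarith only [hb3, hb4]) (by rw [hE2]; push_cast; linarith only [hb3, hb4])
    rw [h1, h2, h4]; push_cast at hE ⊢; linarith only [hE, hb3, hb4]
  rcases le_or_gt t (1/8:ℝ) with hb5|hb5
  · have h1 : phi (t) = t - ((0:ℤ):ℝ) := phi_eq_of_le (0) (by push_cast; linarith only [hb4, hb5]) (by push_cast; linarith only [hb4, hb5])
    have h2 : phi (2*t) = 2*t - ((0:ℤ):ℝ) := phi_eq_of_le (0) (by push_cast; linarith only [hb4, hb5]) (by push_cast; linarith only [hb4, hb5])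
    have h4 : phi (4*t) = 4*t - ((0:ℤ):ℝ) := phi_eq_of_le (0) (by push_cast; linarith only [hb4, hb5]) (by push_cast; linarith only [hb4, hb5])
    have hE1 : phi (8*t - (1/3:ℝ)) = ((0:ℤ):ℝ) + 1 - (8*t - (1/3:ℝ)) := phi_eq_of_ge (0) (by push_cast; linarith only [hb4, hb5]) (by push_cast; linarith only [hb4, hb5])
    have hE2 : phi (8*t + (1/3:ℝ)) = 8*t + (1/3:ℝ) - ((1:ℤ):ℝ) := phi_eq_of_le (1) (by push_cast; linarith only [hb4, hb5]) (by push_cast; linarith only [hb4, hb5])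
    have hE : ((-(2/3:ℝ)) + 8*t) ≤ min (phi (8*t - (1/3:ℝ))) (phi (8*t + (1/3:ℝ))) := le_min (by rw [hE1]; push_cast; linarith only [hb4, hb5]) (by rw [hE2]; push_cast; linarith only [hb4, hb5])
    rw [h1, h2, h4]; push_cast at hE ⊢; linarith only [hE, hb4, hb5]
  rcases le_or_gt t (7/48:ℝ) with hb6|hb6
  · have h1 : phi (t) = t - ((0:ℤ):ℝ) := phi_eq_of_le (0) (by push_cast; linarith only [hb5, hb6]) (by push_cast; linarith only [hb5, hb6])
    have h2 : phi (2*t) = 2*t - ((0:ℤ):ℝ) := phi_eq_of_le (0) (by push_cast; linarith only [hb5, hb6]) (by push_cast; linarith only [hb5, hb6])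
    have h4 : phi (4*t) = ((0:ℤ):ℝ) + 1 - (4*t) := phi_eq_of_ge (0) (by push_cast; linarith only [hb5, hb6]) (by push_cast; linarith only [hb5, hb6])
    have hE1 : phi (8*t - (1/3:ℝ)) = ((0:ℤ):ℝ) + 1 - (8*t - (1/3:ℝ)) := phi_eq_of_ge (0) (by push_cast; linarith only [hb5, hb6]) (by push_cast; linarith only [hb5, hb6])
    have hE2 : phi (8*t + (1/3:ℝ)) = 8*t + (1/3:ℝ) - ((1:ℤ):ℝ) := phi_eq_of_le (1) (by push_cast; linarith only [hb5, hb6]) (by push_cast; linarith only [hb5, hb6])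
    have hE : ((4/3:ℝ) + (-8:ℝ)*t) ≤ min (phi (8*t - (1/3:ℝ))) (phi (8*t + (1/3:ℝ))) := le_min (by rw [hE1]; push_cast; linarith only [hb5, hb6]) (by rw [hE2]; push_cast; linarith only [hb5, hb6])
    rw [h1, h2, h4]; push_cast at hE ⊢; linarith only [hE, hb5, hb6]
  rcases le_or_gt t (1/6:ℝ) with hb7|hb7
  · have h1 : phi (t) = t - ((0:ℤ):ℝ) := phi_eq_of_le (0) (by push_cast; linarith only [hb6, hb7]) (by push_cast; linarith only [hb6, hb7])
    have h2 : phi (2*t) = 2*t - ((0:ℤ):ℝ) := phi_eq_of_le (0) (by push_cast; linarith only [hb6, hb7]) (by push_cast; linarith only [hb6, hb7])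
    have h4 : phi (4*t) = ((0:ℤ):ℝ) + 1 - (4*t) := phi_eq_of_ge (0) (by push_cast; linarith only [hb6, hb7]) (by push_cast; linarith only [hb6, hb7])
    have hE1 : phi (8*t - (1/3:ℝ)) = ((0:ℤ):ℝ) + 1 - (8*t - (1/3:ℝ)) := phi_eq_of_ge (0) (by push_cast; linarith only [hb6, hb7]) (by push_cast; linarith only [hb6, hb7])
    have hE2 : phi (8*t + (1/3:ℝ)) = ((1:ℤ):ℝ) + 1 - (8*t + (1/3:ℝ)) := phi_eq_of_ge (1) (by push_cast; linarith only [hb6, hb7]) (by push_cast; linarith only [hb6, hb7])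
    have hE : ((4/3:ℝ) + (-8:ℝ)*t) ≤ min (phi (8*t - (1/3:ℝ))) (phi (8*t + (1/3:ℝ))) := le_min (by rw [hE1]; push_cast; linarith only [hb6, hb7]) (by rw [hE2]; push_cast; linarith only [hb6, hb7])
    rw [h1, h2, h4]; push_cast at hE ⊢; linarith only [hE, hb6, hb7]
  rcases le_or_gt t (3/16:ℝ) with hb8|hb8
  · have h1 : phi (t) = t - ((0:ℤ):ℝ) := phi_eq_of_le (0) (by push_cast; linarith only [hb7, hb8]) (by push_cast; linarith only [hb7, hb8])
    have h2 : phi (2*t) = 2*t - ((0:ℤ):ℝ) := phi_eq_of_le (0) (by push_cast; linarith only [hb7, hb8]) (by push_cast; linarith only [hb7, hb8])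
    have h4 : phi (4*t) = ((0:ℤ):ℝ) + 1 - (4*t) := phi_eq_of_ge (0) (by push_cast; linarith only [hb7, hb8]) (by push_cast; linarith only [hb7, hb8])
    have hE1 : phi (8*t - (1/3:ℝ)) = 8*t - (1/3:ℝ) - ((1:ℤ):ℝ) := phi_eq_of_le (1) (by push_cast; linarith only [hb7, hb8]) (by push_cast; linarith only [hb7, hb8])
    have hE2 : phi (8*t + (1/3:ℝ)) = ((1:ℤ):ℝ) + 1 - (8*t + (1/3:ℝ)) := phi_eq_of_ge (1) (by push_cast; linarith only [hb7, hb8]) (by push_cast; linarith only [hb7, hb8])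
    have hE : ((-(4/3:ℝ)) + 8*t) ≤ min (phi (8*t - (1/3:ℝ))) (phi (8*t + (1/3:ℝ))) := le_min (by rw [hE1]; push_cast; linarith only [hb7, hb8]) (by rw [hE2]; push_cast; linarith only [hb7, hb8])
    rw [h1, h2, h4]; push_cast at hE ⊢; linarith only [hE, hb7, hb8]
  rcases le_or_gt t (5/24:ℝ) with hb9|hb9
  · have h1 : phi (t) = t - ((0:ℤ):ℝ) := phi_eq_of_le (0) (by push_cast; linarith only [hb8, hb9]) (by push_cast; linarith only [hb8, hb9])
    have h2 : phi (2*t) = 2*t - ((0:ℤ):ℝ) := phi_eq_of_le (0) (by push_cast; linarith only [hb8, hb9]) (by push_cast; linarith only [hb8, hb9])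
    have h4 : phi (4*t) = ((0:ℤ):ℝ) + 1 - (4*t) := phi_eq_of_ge (0) (by push_cast; linarith only [hb8, hb9]) (by push_cast; linarith only [hb8, hb9])
    have hE1 : phi (8*t - (1/3:ℝ)) = 8*t - (1/3:ℝ) - ((1:ℤ):ℝ) := phi_eq_of_le (1) (by push_cast; linarith only [hb8, hb9]) (by push_cast; linarith only [hb8, hb9])
    have hE2 : phi (8*t + (1/3:ℝ)) = ((1:ℤ):ℝ) + 1 - (8*t + (1/3:ℝ)) := phi_eq_of_ge (1) (by push_cast; linarith only [hb8, hb9]) (by push_cast; linarith only [hb8, hb9])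
    have hE : ((5/3:ℝ) + (-8:ℝ)*t) ≤ min (phi (8*t - (1/3:ℝ))) (phi (8*t + (1/3:ℝ))) := le_min (by rw [hE1]; push_cast; linarith only [hb8, hb9]) (by rw [hE2]; push_cast; linarith only [hb8, hb9])
    rw [h1, h2, h4]; push_cast at hE ⊢; linarith only [hE, hb8, hb9]
  rcases le_or_gt t (11/48:ℝ) with hb10|hb10
  · have h1 : phi (t) = t - ((0:ℤ):ℝ) := phi_eq_of_le (0) (by push_cast; linarith only [hb9, hb10]) (by push_cast; linarith only [hb9, hb10])
    have h2 : phi (2*t) = 2*t - ((0:ℤ):ℝ) := phi_eq_of_le (0) (by push_cast; linarith only [hb9, hb10]) (by push_cast; linarith only [hb9, hb10])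
    have h4 : phi (4*t) = ((0:ℤ):ℝ) + 1 - (4*t) := phi_eq_of_ge (0) (by push_cast; linarith only [hb9, hb10]) (by push_cast; linarith only [hb9, hb10])
    have hE1 : phi (8*t - (1/3:ℝ)) = 8*t - (1/3:ℝ) - ((1:ℤ):ℝ) := phi_eq_of_le (1) (by push_cast; linarith only [hb9, hb10]) (by push_cast; linarith only [hb9, hb10])
    have hE2 : phi (8*t + (1/3:ℝ)) = 8*t + (1/3:ℝ) - ((2:ℤ):ℝ) := phi_eq_of_le (2) (by push_cast; linarith only [hb9, hb10]) (by push_cast; linarith only [hb9, hb10])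
    have hE : ((-(5/3:ℝ)) + 8*t) ≤ min (phi (8*t - (1/3:ℝ))) (phi (8*t + (1/3:ℝ))) := le_min (by rw [hE1]; push_cast; linarith only [hb9, hb10]) (by rw [hE2]; push_cast; linarith only [hb9, hb10])
    rw [h1, h2, h4]; push_cast at hE ⊢; linarith only [hE, hb9, hb10]
  rcases le_or_gt t (1/4:ℝ) with hb11|hb11
  · have h1 : phi (t) = t - ((0:ℤ):ℝ) := phi_eq_of_le (0) (by push_cast; linarith only [hb10, hb11]) (by push_cast; linarith only [hb10, hb11])
    have h2 : phi (2*t) = 2*t - ((0:ℤ):ℝ) := phi_eq_of_le (0) (by push_cast; linarith only [hb10, hb11]) (by push_cast; linarith only [hb10, hb11])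
    have h4 : phi (4*t) = ((0:ℤ):ℝ) + 1 - (4*t) := phi_eq_of_ge (0) (by push_cast; linarith only [hb10, hb11]) (by push_cast; linarith only [hb10, hb11])
    have hE1 : phi (8*t - (1/3:ℝ)) = ((1:ℤ):ℝ) + 1 - (8*t - (1/3:ℝ)) := phi_eq_of_ge (1) (by push_cast; linarith only [hb10, hb11]) (by push_cast; linarith only [hb10, hb11])
    have hE2 : phi (8*t + (1/3:ℝ)) = 8*t + (1/3:ℝ) - ((2:ℤ):ℝ) := phi_eq_of_le (2) (by push_cast; linarith only [hb10, hb11]) (by push_cast; linarith only [hb10, hb11])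
    have hE : ((-(5/3:ℝ)) + 8*t) ≤ min (phi (8*t - (1/3:ℝ))) (phi (8*t + (1/3:ℝ))) := le_min (by rw [hE1]; push_cast; linarith only [hb10, hb11]) (by rw [hE2]; push_cast; linarith only [hb10, hb11])
    rw [h1, h2, h4]; push_cast at hE ⊢; linarith only [hE, hb10, hb11]
  rcases le_or_gt t (13/48:ℝ) with hb12|hb12
  · have h1 : phi (t) = t - ((0:ℤ):ℝ) := phi_eq_of_le (0) (by push_cast; linarith only [hb11, hb12]) (by push_cast; linarith only [hb11, hb12])
    have h2 : phi (2*t) = ((0:ℤ):ℝ) + 1 - (2*t) := phi_eq_of_ge (0) (by push_cast; linarith only [hb11, hb12]) (by push_cast; linarith only [hb11, hb12])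
    have h4 : phi (4*t) = 4*t - ((1:ℤ):ℝ) := phi_eq_of_le (1) (by push_cast; linarith only [hb11, hb12]) (by push_cast; linarith only [hb11, hb12])
    have hE1 : phi (8*t - (1/3:ℝ)) = ((1:ℤ):ℝ) + 1 - (8*t - (1/3:ℝ)) := phi_eq_of_ge (1) (by push_cast; linarith only [hb11, hb12]) (by push_cast; linarith only [hb11, hb12])
    have hE2 : phi (8*t + (1/3:ℝ)) = 8*t + (1/3:ℝ) - ((2:ℤ):ℝ) := phi_eq_of_le (2) (by push_cast; linarith only [hb11, hb12]) (by push_cast; linarith only [hb11, hb12])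
    have hE : ((7/3:ℝ) + (-8:ℝ)*t) ≤ min (phi (8*t - (1/3:ℝ))) (phi (8*t + (1/3:ℝ))) := le_min (by rw [hE1]; push_cast; linarith only [hb11, hb12]) (by rw [hE2]; push_cast; linarith only [hb11, hb12])
    rw [h1, h2, h4]; push_cast at hE ⊢; linarith only [hE, hb11, hb12]
  rcases le_or_gt t (7/24:ℝ) with hb13|hb13
  · have h1 : phi (t) = t - ((0:ℤ):ℝ) := phi_eq_of_le (0) (by push_cast; linarith only [hb12, hb13]) (by push_cast; linarith only [hb12, hb13])
    have h2 : phi (2*t) = ((0:ℤ):ℝ) + 1 - (2*t) := phi_eq_of_ge (0) (by push_cast; linarith only [hb12, hb13]) (by push_cast; linarith only [hb12, hb13])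
    have h4 : phi (4*t) = 4*t - ((1:ℤ):ℝ) := phi_eq_of_le (1) (by push_cast; linarith only [hb12, hb13]) (by push_cast; linarith only [hb12, hb13])
    have hE1 : phi (8*t - (1/3:ℝ)) = ((1:ℤ):ℝ) + 1 - (8*t - (1/3:ℝ)) := phi_eq_of_ge (1) (by push_cast; linarith only [hb12, hb13]) (by push_cast; linarith only [hb12, hb13])
    have hE2 : phi (8*t + (1/3:ℝ)) = ((2:ℤ):ℝ) + 1 - (8*t + (1/3:ℝ)) := phi_eq_of_ge (2) (by push_cast; linarith only [hb12, hb13]) (by push_cast; linarith only [hb12, hb13])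
    have hE : ((7/3:ℝ) + (-8:ℝ)*t) ≤ min (phi (8*t - (1/3:ℝ))) (phi (8*t + (1/3:ℝ))) := le_min (by rw [hE1]; push_cast; linarith only [hb12, hb13]) (by rw [hE2]; push_cast; linarith only [hb12, hb13])
    rw [h1, h2, h4]; push_cast at hE ⊢; linarith only [hE, hb12, hb13]
  rcases le_or_gt t (5/16:ℝ) with hb14|hb14
  · have h1 : phi (t) = t - ((0:ℤ):ℝ) := phi_eq_of_le (0) (by push_cast; linarith only [hb13, hb14]) (by push_cast; linarith only [hb13, hb14])
    have h2 : phi (2*t) = ((0:ℤ):ℝ) + 1 - (2*t) := phi_eq_of_ge (0) (by push_cast; linarith only [hb13, hb14]) (by push_cast; linarith only [hb13, hb14])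
    have h4 : phi (4*t) = 4*t - ((1:ℤ):ℝ) := phi_eq_of_le (1) (by push_cast; linarith only [hb13, hb14]) (by push_cast; linarith only [hb13, hb14])
    have hE1 : phi (8*t - (1/3:ℝ)) = 8*t - (1/3:ℝ) - ((2:ℤ):ℝ) := phi_eq_of_le (2) (by push_cast; linarith only [hb13, hb14]) (by push_cast; linarith only [hb13, hb14])
    have hE2 : phi (8*t + (1/3:ℝ)) = ((2:ℤ):ℝ) + 1 - (8*t + (1/3:ℝ)) := phi_eq_of_ge (2) (by push_cast; linarith only [hb13, hb14]) (by push_cast; linarith only [hb13, hb14])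
    have hE : ((-(7/3:ℝ)) + 8*t) ≤ min (phi (8*t - (1/3:ℝ))) (phi (8*t + (1/3:ℝ))) := le_min (by rw [hE1]; push_cast; linarith only [hb13, hb14]) (by rw [hE2]; push_cast; linarith only [hb13, hb14])
    rw [h1, h2, h4]; push_cast at hE ⊢; linarith only [hE, hb13, hb14]
  rcases le_or_gt t (1/3:ℝ) with hb15|hb15
  · have h1 : phi (t) = t - ((0:ℤ):ℝ) := phi_eq_of_le (0) (by push_cast; linarith only [hb14, hb15]) (by push_cast; linarith only [hb14, hb15])
    have h2 : phi (2*t) = ((0:ℤ):ℝ) + 1 - (2*t) := phi_eq_of_ge (0) (by push_cast; linarith only [hb14, hb15]) (by push_cast; linarith only [hb14, hb15])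
    have h4 : phi (4*t) = 4*t - ((1:ℤ):ℝ) := phi_eq_of_le (1) (by push_cast; linarith only [hb14, hb15]) (by push_cast; linarith only [hb14, hb15])
    have hE1 : phi (8*t - (1/3:ℝ)) = 8*t - (1/3:ℝ) - ((2:ℤ):ℝ) := phi_eq_of_le (2) (by push_cast; linarith only [hb14, hb15]) (by push_cast; linarith only [hb14, hb15])
    have hE2 : phi (8*t + (1/3:ℝ)) = ((2:ℤ):ℝ) + 1 - (8*t + (1/3:ℝ)) := phi_eq_of_ge (2) (by push_cast; linarith only [hb14, hb15]) (by push_cast; linarith only [hb14, hb15])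
    have hE : ((8/3:ℝ) + (-8:ℝ)*t) ≤ min (phi (8*t - (1/3:ℝ))) (phi (8*t + (1/3:ℝ))) := le_min (by rw [hE1]; push_cast; linarith only [hb14, hb15]) (by rw [hE2]; push_cast; linarith only [hb14, hb15])
    rw [h1, h2, h4]; push_cast at hE ⊢; linarith only [hE, hb14, hb15]
  rcases le_or_gt t (17/48:ℝ) with hb16|hb16
  · have h1 : phi (t) = t - ((0:ℤ):ℝ) := phi_eq_of_le (0) (by push_cast; linarith only [hb15, hb16]) (by push_cast; linarith only [hb15, hb16])
    have h2 : phi (2*t) = ((0:ℤ):ℝ) + 1 - (2*t) := phi_eq_of_ge (0) (by push_cast; linarith only [hb15, hb16]) (by push_cast; linarith only [hb15, hb16])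
    have h4 : phi (4*t) = 4*t - ((1:ℤ):ℝ) := phi_eq_of_le (1) (by push_cast; linarith only [hb15, hb16]) (by push_cast; linarith only [hb15, hb16])
    have hE1 : phi (8*t - (1/3:ℝ)) = 8*t - (1/3:ℝ) - ((2:ℤ):ℝ) := phi_eq_of_le (2) (by push_cast; linarith only [hb15, hb16]) (by push_cast; linarith only [hb15, hb16])
    have hE2 : phi (8*t + (1/3:ℝ)) = 8*t + (1/3:ℝ) - ((3:ℤ):ℝ) := phi_eq_of_le (3) (by push_cast; linarith only [hb15, hb16]) (by push_cast; linarith only [hb15, hb16])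
    have hE : ((-(8/3:ℝ)) + 8*t) ≤ min (phi (8*t - (1/3:ℝ))) (phi (8*t + (1/3:ℝ))) := le_min (by rw [hE1]; push_cast; linarith only [hb15, hb16]) (by rw [hE2]; push_cast; linarith only [hb15, hb16])
    rw [h1, h2, h4]; push_cast at hE ⊢; linarith only [hE, hb15, hb16]
  rcases le_or_gt t (3/8:ℝ) with hb17|hb17
  · have h1 : phi (t) = t - ((0:ℤ):ℝ) := phi_eq_of_le (0) (by push_cast; linarith only [hb16, hb17]) (by push_cast; linarith only [hb16, hb17])
    have h2 : phi (2*t) = ((0:ℤ):ℝ) + 1 - (2*t) := phi_eq_of_ge (0) (by push_cast; linarith only [hb16, hb17]) (by push_cast; linarith only [hb16, hb17])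
    have h4 : phi (4*t) = 4*t - ((1:ℤ):ℝ) := phi_eq_of_le (1) (by push_cast; linarith only [hb16, hb17]) (by push_cast; linarith only [hb16, hb17])
    have hE1 : phi (8*t - (1/3:ℝ)) = ((2:ℤ):ℝ) + 1 - (8*t - (1/3:ℝ)) := phi_eq_of_ge (2) (by push_cast; linarith only [hb16, hb17]) (by push_cast; linarith only [hb16, hb17])
    have hE2 : phi (8*t + (1/3:ℝ)) = 8*t + (1/3:ℝ) - ((3:ℤ):ℝ) := phi_eq_of_le (3) (by push_cast; linarith only [hb16, hb17]) (by push_cast; linarith only [hb16, hb17])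
    have hE : ((-(8/3:ℝ)) + 8*t) ≤ min (phi (8*t - (1/3:ℝ))) (phi (8*t + (1/3:ℝ))) := le_min (by rw [hE1]; push_cast; linarith only [hb16, hb17]) (by rw [hE2]; push_cast; linarith only [hb16, hb17])
    rw [h1, h2, h4]; push_cast at hE ⊢; linarith only [hE, hb16, hb17]
  rcases le_or_gt t (19/48:ℝ) with hb18|hb18
  · have h1 : phi (t) = t - ((0:ℤ):ℝ) := phi_eq_of_le (0) (by push_cast; linarith only [hb17, hb18]) (by push_cast; linarith only [hb17, hb18])
    have h2 : phi (2*t) = ((0:ℤ):ℝ) + 1 - (2*t) := phi_eq_of_ge (0) (by push_cast; linarith only [hb17, hb18]) (by push_cast; linarith only [hb17, hb18])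
    have h4 : phi (4*t) = ((1:ℤ):ℝ) + 1 - (4*t) := phi_eq_of_ge (1) (by push_cast; linarith only [hb17, hb18]) (by push_cast; linarith only [hb17, hb18])
    have hE1 : phi (8*t - (1/3:ℝ)) = ((2:ℤ):ℝ) + 1 - (8*t - (1/3:ℝ)) := phi_eq_of_ge (2) (by push_cast; linarith only [hb17, hb18]) (by push_cast; linarith only [hb17, hb18])
    have hE2 : phi (8*t + (1/3:ℝ)) = 8*t + (1/3:ℝ) - ((3:ℤ):ℝ) := phi_eq_of_le (3) (by push_cast; linarith only [hb17, hb18]) (by push_cast; linarith only [hb17, hb18])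
    have hE : ((10/3:ℝ) + (-8:ℝ)*t) ≤ min (phi (8*t - (1/3:ℝ))) (phi (8*t + (1/3:ℝ))) := le_min (by rw [hE1]; push_cast; linarith only [hb17, hb18]) (by rw [hE2]; push_cast; linarith only [hb17, hb18])
    rw [h1, h2, h4]; push_cast at hE ⊢; linarith only [hE, hb17, hb18]
  rcases le_or_gt t (5/12:ℝ) with hb19|hb19
  · have h1 : phi (t) = t - ((0:ℤ):ℝ) := phi_eq_of_le (0) (by push_cast; linarith only [hb18, hb19]) (by push_cast; linarith only [hb18, hb19])
    have h2 : phi (2*t) = ((0:ℤ):ℝ) + 1 - (2*t) := phi_eq_of_ge (0) (by push_cast; linarith only [hb18, hb19]) (by push_cast; linarith only [hb18, hb19])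
    have h4 : phi (4*t) = ((1:ℤ):ℝ) + 1 - (4*t) := phi_eq_of_ge (1) (by push_cast; linarith only [hb18, hb19]) (by push_cast; linarith only [hb18, hb19])
    have hE1 : phi (8*t - (1/3:ℝ)) = ((2:ℤ):ℝ) + 1 - (8*t - (1/3:ℝ)) := phi_eq_of_ge (2) (by push_cast; linarith only [hb18, hb19]) (by push_cast; linarith only [hb18, hb19])
    have hE2 : phi (8*t + (1/3:ℝ)) = ((3:ℤ):ℝ) + 1 - (8*t + (1/3:ℝ)) := phi_eq_of_ge (3) (by push_cast; linarith only [hb18, hb19]) (by push_cast; linarith only [hb18, hb19])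
    have hE : ((10/3:ℝ) + (-8:ℝ)*t) ≤ min (phi (8*t - (1/3:ℝ))) (phi (8*t + (1/3:ℝ))) := le_min (by rw [hE1]; push_cast; linarith only [hb18, hb19]) (by rw [hE2]; push_cast; linarith only [hb18, hb19])
    rw [h1, h2, h4]; push_cast at hE ⊢; linarith only [hE, hb18, hb19]
  rcases le_or_gt t (7/16:ℝ) with hb20|hb20
  · have h1 : phi (t) = t - ((0:ℤ):ℝ) := phi_eq_of_le (0) (by push_cast; linarith only [hb19, hb20]) (by push_cast; linarith only [hb19, hb20])
    have h2 : phi (2*t) = ((0:ℤ):ℝ) + 1 - (2*t) := phi_eq_of_ge (0) (by push_cast; linarith only [hb19, hb20]) (by push_cast; linarith only [hb19, hb20])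
    have h4 : phi (4*t) = ((1:ℤ):ℝ) + 1 - (4*t) := phi_eq_of_ge (1) (by push_cast; linarith only [hb19, hb20]) (by push_cast; linarith only [hb19, hb20])
    have hE1 : phi (8*t - (1/3:ℝ)) = 8*t - (1/3:ℝ) - ((3:ℤ):ℝ) := phi_eq_of_le (3) (by push_cast; linarith only [hb19, hb20]) (by push_cast; linarith only [hb19, hb20])
    have hE2 : phi (8*t + (1/3:ℝ)) = ((3:ℤ):ℝ) + 1 - (8*t + (1/3:ℝ)) := phi_eq_of_ge (3) (by push_cast; linarith only [hb19, hb20]) (by push_cast; linarith only [hb19, hb20])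
    have hE : ((-(10/3:ℝ)) + 8*t) ≤ min (phi (8*t - (1/3:ℝ))) (phi (8*t + (1/3:ℝ))) := le_min (by rw [hE1]; push_cast; linarith only [hb19, hb20]) (by rw [hE2]; push_cast; linarith only [hb19, hb20])
    rw [h1, h2, h4]; push_cast at hE ⊢; linarith only [hE, hb19, hb20]
  rcases le_or_gt t (11/24:ℝ) with hb21|hb21
  · have hlt : t < 11/24 := lt_of_le_of_ne (by linarith only [hb21]) hne
    have h1 : phi (t) = t - ((0:ℤ):ℝ) := phi_eq_of_le (0) (by push_cast; linarith only [hb20, hb21]) (by push_cast; linarith only [hb20, hb21])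
    have h2 : phi (2*t) = ((0:ℤ):ℝ) + 1 - (2*t) := phi_eq_of_ge (0) (by push_cast; linarith only [hb20, hb21]) (by push_cast; linarith only [hb20, hb21])
    have h4 : phi (4*t) = ((1:ℤ):ℝ) + 1 - (4*t) := phi_eq_of_ge (1) (by push_cast; linarith only [hb20, hb21]) (by push_cast; linarith only [hb20, hb21])
    have hE1 : phi (8*t - (1/3:ℝ)) = 8*t - (1/3:ℝ) - ((3:ℤ):ℝ) := phi_eq_of_le (3) (by push_cast; linarith only [hb20, hb21]) (by push_cast; linarith only [hb20, hb21])
    have hE2 : phi (8*t + (1/3:ℝ)) = ((3:ℤ):ℝ) + 1 - (8*t + (1/3:ℝ)) := phi_eq_of_ge (3) (by push_cast; linarith only [hb20, hb21]) (by push_cast; linarith only [hb20, hb21])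
    have hE : ((11/3:ℝ) + (-8:ℝ)*t) ≤ min (phi (8*t - (1/3:ℝ))) (phi (8*t + (1/3:ℝ))) := le_min (by rw [hE1]; push_cast; linarith only [hb20, hb21]) (by rw [hE2]; push_cast; linarith only [hb20, hb21])
    rw [h1, h2, h4]; push_cast at hE ⊢; linarith only [hE, hlt, hb20, hb21]
  rcases le_or_gt t (23/48:ℝ) with hb22|hb22
  · have hlt : 11/24 < t := lt_of_le_of_ne (by linarith only [hb21]) (Ne.symm hne)
    have h1 : phi (t) = t - ((0:ℤ):ℝ) := phi_eq_of_le (0) (by push_cast; linarith only [hb21, hb22]) (by push_cast; linarith only [hb21, hb22])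
    have h2 : phi (2*t) = ((0:ℤ):ℝ) + 1 - (2*t) := phi_eq_of_ge (0) (by push_cast; linarith only [hb21, hb22]) (by push_cast; linarith only [hb21, hb22])
    have h4 : phi (4*t) = ((1:ℤ):ℝ) + 1 - (4*t) := phi_eq_of_ge (1) (by push_cast; linarith only [hb21, hb22]) (by push_cast; linarith only [hb21, hb22])
    have hE1 : phi (8*t - (1/3:ℝ)) = 8*t - (1/3:ℝ) - ((3:ℤ):ℝ) := phi_eq_of_le (3) (by push_cast; linarith only [hb21, hb22]) (by push_cast; linarith only [hb21, hb22])
    have hE2 : phi (8*t + (1/3:ℝ)) = 8*t + (1/3:ℝ) - ((4:ℤ):ℝ) := phi_eq_of_le (4) (by push_cast; linarith only [hb21, hb22]) (by push_cast; linarith only [hb21, hb22])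
    have hE : ((-(11/3:ℝ)) + 8*t) ≤ min (phi (8*t - (1/3:ℝ))) (phi (8*t + (1/3:ℝ))) := le_min (by rw [hE1]; push_cast; linarith only [hb21, hb22]) (by rw [hE2]; push_cast; linarith only [hb21, hb22])
    rw [h1, h2, h4]; push_cast at hE ⊢; linarith only [hE, hlt, hb21, hb22]
  have h1 : phi (t) = t - ((0:ℤ):ℝ) := phi_eq_of_le (0) (by push_cast; linarith only [hb22, ht1]) (by push_cast; linarith only [hb22, ht1])
  have h2 : phi (2*t) = ((0:ℤ):ℝ) + 1 - (2*t) := phi_eq_of_ge (0) (by push_cast; linarith only [hb22, ht1]) (by push_cast; linarith only [hb22, ht1])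
  have h4 : phi (4*t) = ((1:ℤ):ℝ) + 1 - (4*t) := phi_eq_of_ge (1) (by push_cast; linarith only [hb22, ht1]) (by push_cast; linarith only [hb22, ht1])
  have hE1 : phi (8*t - (1/3:ℝ)) = ((3:ℤ):ℝ) + 1 - (8*t - (1/3:ℝ)) := phi_eq_of_ge (3) (by push_cast; linarith only [hb22, ht1]) (by push_cast; linarith only [hb22, ht1])
  have hE2 : phi (8*t + (1/3:ℝ)) = 8*t + (1/3:ℝ) - ((4:ℤ):ℝ) := phi_eq_of_le (4) (by push_cast; linarith only [hb22, ht1]) (by push_cast; linarith only [hb22, ht1])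
  have hE : ((-(11/3:ℝ)) + 8*t) ≤ min (phi (8*t - (1/3:ℝ))) (phi (8*t + (1/3:ℝ))) := le_min (by rw [hE1]; push_cast; linarith only [hb22, ht1]) (by rw [hE2]; push_cast; linarith only [hb22, ht1])
  rw [h1, h2, h4]; push_cast at hE ⊢; linarith only [hE, hb22, ht1]




noncomputable def q (m : ℕ) : ℝ := 1 / ((m:ℝ) + 4)^2
noncomputable def W : ℕ → ℝ
  | 0 => 1/16
  | (j+1) => q (j+1) - W j / 2
noncomputable def g (y : ℝ) : ℝ := ∑' m : ℕ, q m * phi (2^m * y)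
noncomputable def Qc : ℝ := ∑' m : ℕ, q m

lemma q_pos (m : ℕ) : 0 < q m := by unfold q; positivity

lemma summable_q : Summable q := by
  have h : Summable (fun n : ℕ => 1/((n:ℝ))^2) :=
    (Real.summable_one_div_nat_pow (p := 2)).mpr (by norm_num)
  have h4 := (summable_nat_add_iff (f := fun n : ℕ => 1/((n:ℝ))^2) 4).mpr h
  apply h4.congr
  intro m
  unfold q
  push_cast
  ring_nf

lemma psi_per (x : ℝ) (n : ℤ) : psi (x + n) = psi x := by
  unfold psi
  rw [phi_add_int]
  have h2 : 2*(x + (n:ℝ)) = 2*x + ((2*n : ℤ):ℝ) := by push_cast; ring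
  rw [h2, phi_add_int]

lemma e_per (x : ℝ) (n : ℤ) : e (x + n) = e x := by
  unfold e
  have h1 : x + (n:ℝ) - 1/3 = (x - 1/3) + (n:ℝ) := by ring
  have h2 : x + (n:ℝ) + 1/3 = (x + 1/3) + (n:ℝ) := by ring
  rw [h1, h2, phi_add_int, phi_add_int]

lemma psi_nonneg (x : ℝ) : 0 ≤ psi x := by
  have h := psi_nonneg0 (Int.fract x) (Int.fract_nonneg x) (Int.fract_lt_one x)
  have : psi x = psi (Int.fract x) := by
    conv_lhs => rw [← Int.fract_add_floor x]
    rw [psi_per]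
  linarith [this ▸ h]

lemma psi_le_half (x : ℝ) : psi x ≤ 1/2 := by
  unfold psi
  have := phi_nonneg x
  have := phi_nonneg (2*x)
  linarith

lemma e_nonneg (x : ℝ) : 0 ≤ e x := le_min (phi_nonneg _) (phi_nonneg _)

lemma e_le_half (x : ℝ) : e x ≤ 1/2 := (min_le_left _ _).trans (phi_le_half _)

lemma lambda1 (x : ℝ) : e x ≤ psi x + e (2*x) / 2 := by
  have hx : x = Int.fract x + (⌊x⌋ : ℝ) := by rw [add_comm, Int.floor_add_fract]
  have h2 : 2*x = 2*Int.fract x + ((2*⌊x⌋ : ℤ) : ℝ) := by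
    push_cast; nth_rewrite 1 [hx]; ring
  calc e x = e (Int.fract x) := by nth_rewrite 1 [hx]; exact e_per _ _
    _ ≤ psi (Int.fract x) + e (2*Int.fract x) / 2 :=
        lambda1_0 _ (Int.fract_nonneg x) (Int.fract_lt_one x)
    _ = psi x + e (2*x) / 2 := by
        rw [show psi (Int.fract x) = psi x by nth_rewrite 2 [hx]; rw [psi_per]]
        rw [h2, e_per]

lemma pow_two_mul (j : ℕ) (y : ℝ) : phi (2*(2^j*y)) = phi (2^(j+1)*y) := by
  rw [show 2*((2:ℝ)^j*y) = 2^(j+1)*y by ring]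

lemma summable_psi_geom (x : ℝ) : Summable (fun j : ℕ => (1/2:ℝ)^j * psi (2^j * x)) := by
  apply Summable.of_nonneg_of_le
  · intro j; have := psi_nonneg (2^j*x); positivity
  · intro j
    have h1 := psi_le_half (2^j*x)
    have h2 : (0:ℝ) ≤ (1/2:ℝ)^j := by positivity
    calc (1/2:ℝ)^j * psi (2^j*x) ≤ (1/2:ℝ)^j * (1/2) := by nlinarith
      _ = (1/2:ℝ)^j * (1/2) := rfl
  · exact (summable_geometric_of_lt_one (by norm_num) (by norm_num)).mul_right _

lemma e_le_S (x : ℝ) : e x ≤ ∑' j : ℕ, (1/2:ℝ)^j * psi (2^j * x) := by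
  have key : ∀ N : ℕ, e x ≤ (∑ j ∈ Finset.range N, (1/2:ℝ)^j * psi (2^j * x))
      + (1/2:ℝ)^N * e (2^N * x) := by
    intro N
    induction N with
    | zero => simp
    | succ N ih =>
      have hl := lambda1 (2^N * x)
      have hp : (0:ℝ) < (1/2:ℝ)^N := by positivity
      have : (1/2:ℝ)^N * e (2^N*x) ≤ (1/2:ℝ)^N * psi (2^N*x) + (1/2:ℝ)^(N+1) * e (2^(N+1)*x) := by
        have h2 : e (2*(2^N*x)) = e (2^(N+1)*x) := by
          rw [show 2*((2:ℝ)^N*x) = 2^(N+1)*x by ring]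
        rw [h2] at hl
        have := mul_le_mul_of_nonneg_left hl (le_of_lt hp)
        calc (1/2:ℝ)^N * e (2^N*x) ≤ (1/2:ℝ)^N * (psi (2^N*x) + e (2^(N+1)*x)/2) := this
          _ = (1/2:ℝ)^N * psi (2^N*x) + (1/2:ℝ)^(N+1) * e (2^(N+1)*x) := by ring
      rw [Finset.sum_range_succ]
      linarith
  have key2 : ∀ N : ℕ, e x ≤ (∑' j : ℕ, (1/2:ℝ)^j * psi (2^j * x)) + (1/2:ℝ)^N * (1/2) := by
    intro N
    have h1 := key N
    have h2 : (∑ j ∈ Finset.range N, (1/2:ℝ)^j * psi (2^j * x))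
        ≤ ∑' j : ℕ, (1/2:ℝ)^j * psi (2^j * x) := by
      apply Summable.sum_le_tsum
      · intro j _; have := psi_nonneg (2^j*x); positivity
      · exact summable_psi_geom x
    have h3 : (1/2:ℝ)^N * e (2^N*x) ≤ (1/2:ℝ)^N * (1/2) := by
      have := e_le_half (2^N*x)
      have := e_nonneg (2^N*x)
      have hp : (0:ℝ) ≤ (1/2:ℝ)^N := by positivity
      nlinarith
    linarith
  have ht : Filter.Tendsto (fun N : ℕ => (∑' j : ℕ, (1/2:ℝ)^j * psi (2^j * x)) + (1/2:ℝ)^N * (1/2))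
      Filter.atTop (nhds ((∑' j : ℕ, (1/2:ℝ)^j * psi (2^j * x)) + 0 * (1/2))) := by
    apply Filter.Tendsto.add tendsto_const_nhds
    exact (tendsto_pow_atTop_nhds_zero_of_lt_one (by norm_num) (by norm_num)).mul_const _
  rw [show (∑' j : ℕ, (1/2:ℝ)^j * psi (2^j * x)) + 0 * (1/2) = ∑' j : ℕ, (1/2:ℝ)^j * psi (2^j * x) by ring] at ht
  exact ge_of_tendsto' ht key2

lemma W_nonneg_le : ∀ j : ℕ, 0 ≤ W j ∧ W j ≤ q j := by
  intro j
  induction j with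
  | zero =>
    constructor
    · norm_num [W]
    · unfold W q; norm_num
  | succ j ih =>
    obtain ⟨h0, h1⟩ := ih
    have hq : q (j+1) - q j / 2 ≥ 0 := by
      have hj : (0:ℝ) ≤ (j:ℝ) := Nat.cast_nonneg j
      have e1 : q j / 2 = 1/(2*((j:ℝ)+4)^2) := by unfold q; rw [div_div]; ring_nf
      have e2 : q (j+1) = 1/(((j:ℝ)+5)^2) := by unfold q; push_cast; ring_nf
      rw [e1, e2, ge_iff_le, sub_nonneg, div_le_div_iff₀ (by positivity) (by positivity)]
      nlinarith
    constructor
    · show 0 ≤ q (j+1) - W j / 2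
      linarith
    · show q (j+1) - W j / 2 ≤ q (j+1)
      linarith

lemma aux_pow : ∀ i : ℕ, 7*((i:ℝ)+4)^2*((i:ℝ)+5)^2 ≤ 400 * 2^i * ((i:ℝ)^2+6*(i:ℝ)+7) := by
  intro i
  induction i with
  | zero => norm_num
  | succ i ih =>
    have hi : (0:ℝ) ≤ (i:ℝ) := Nat.cast_nonneg i
    have hpow : (1:ℝ) ≤ 2^i := one_le_pow₀ (by norm_num)
    have key : ((i:ℝ)+6)^2*((i:ℝ)^2+6*i+7) ≤ 2*((i:ℝ)+4)^2*((i:ℝ)^2+8*i+14) := by nlinarith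
    push_cast
    have h2 : (2:ℝ)^(i+1) = 2*2^i := by ring
    rw [h2]
    nlinarith [mul_pos (show (0:ℝ) < 400*2^i by positivity) (show (0:ℝ) < (i:ℝ)^2+6*i+7 by nlinarith)]

lemma W_ge (j : ℕ) : (7/400) * (1/2:ℝ)^j ≤ W j := by
  cases j with
  | zero => norm_num [W]
  | succ i =>
    have h1 : W (i+1) = q (i+1) - W i / 2 := rfl
    have h2 := (W_nonneg_le i).2
    have h3 : q (i+1) - q i / 2 ≤ W (i+1) := by rw [h1]; linarith
    refine le_trans ?_ h3
    have hi : (0:ℝ) ≤ (i:ℝ) := Nat.cast_nonneg i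
    have haux := aux_pow i
    have hpow : (0:ℝ) < 2^i := by positivity
    have hhalf : (1/2:ℝ)^(i+1) = 1/(2*2^i) := by
      rw [div_pow, one_pow]
      congr 1
      ring
    have e1 : q i / 2 = 1/(2*((i:ℝ)+4)^2) := by unfold q; rw [div_div]; ring_nf
    have e2 : q (i+1) = 1/(((i:ℝ)+5)^2) := by unfold q; push_cast; ring_nf
    rw [hhalf, e1, e2]
    rw [div_sub_div _ _ (by positivity : (((i:ℝ)+5)^2 : ℝ) ≠ 0) (by positivity : (2:ℝ)*((i:ℝ)+4)^2 ≠ 0)]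
    rw [show (7:ℝ)/400 * (1/(2*2^i)) = 7/(400*(2*2^i)) by ring]
    rw [div_le_div_iff₀ (by positivity) (by positivity)]
    nlinarith

lemma summable_qphi (y : ℝ) : Summable (fun m : ℕ => q m * phi (2^m * y)) := by
  apply Summable.of_nonneg_of_le
    (fun m => mul_nonneg (q_pos m).le (phi_nonneg _))
    (fun m => ?_) summable_q
  have := phi_le_half (2^m*y)
  nlinarith [q_pos m]

lemma summable_Wpsi (y : ℝ) : Summable (fun j : ℕ => W j * psi (2^j * y)) := by
  apply Summable.of_nonneg_of_le
    (fun j => mul_nonneg (W_nonneg_le j).1 (psi_nonneg _))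
    (fun j => ?_) summable_q
  have h1 := psi_le_half (2^j*y)
  have h2 := psi_nonneg (2^j*y)
  have h3 := (W_nonneg_le j).1
  have h4 := (W_nonneg_le j).2
  have := q_pos j
  nlinarith

noncomputable def Fj (y : ℝ) (j : ℕ) : ℝ := q j * phi (2^j*y) + W j * psi (2^j*y)

lemma summable_F (y : ℝ) : Summable (Fj y) := (summable_qphi y).add (summable_Wpsi y)

lemma summable_W : Summable W := by
  apply Summable.of_nonneg_of_le (fun j => (W_nonneg_le j).1) (fun j => (W_nonneg_le j).2) summable_q

lemma tsum_W : ∑' j, W j = 2/3 * Qc := by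
  have h1 : ∑' j, q j = q 0 + ∑' j, q (j+1) := (Summable.tsum_eq_zero_add summable_q)
  have h2 : ∀ j : ℕ, q (j+1) = W (j+1) + W j / 2 := by
    intro j
    show q (j+1) = (q (j+1) - W j / 2) + W j / 2
    ring
  have hW1 : Summable (fun j => W (j+1)) := by
    exact (summable_nat_add_iff 1).mpr summable_W
  have hW2 : Summable (fun j : ℕ => W j / 2) := summable_W.div_const 2
  have h3 : ∑' j, q (j+1) = (∑' j, W (j+1)) + ∑' j : ℕ, W j / 2 := by
    rw [← Summable.tsum_add hW1 hW2]
    exact tsum_congr (fun j => h2 j)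
  have h4 : ∑' j, W (j+1) = (∑' j, W j) - W 0 := by
    have := Summable.tsum_eq_zero_add summable_W
    linarith
  have h5 : ∑' j : ℕ, W j / 2 = (∑' j, W j) / 2 := by
    exact tsum_div_const
  have hq0 : q 0 = W 0 := by unfold q W; norm_num
  have : Qc = q 0 + ((∑' j, W j) - W 0) + (∑' j, W j)/2 := by
    unfold Qc; rw [h1, h3, h4, h5]; ring
  rw [hq0] at this
  linarith

lemma partial_F (y : ℝ) : ∀ N : ℕ,
    ∑ j ∈ Finset.range (N+1), Fj y j
      = (∑ j ∈ Finset.range (N+1), W j)/2 - (W N / 2) * phi (2^(N+1)*y) := by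
  intro N
  induction N with
  | zero =>
    simp only [zero_add, Finset.sum_range_one]
    unfold Fj psi
    have hq0 : q 0 = W 0 := by unfold q W; norm_num
    have h2 : phi (2*(2^0*y)) = phi (2^1*y) := pow_two_mul 0 y
    rw [hq0, ← h2]
    ring
  | succ N ih =>
    rw [Finset.sum_range_succ, ih,
      show ∑ j ∈ Finset.range (N+1+1), W j = ∑ j ∈ Finset.range (N+1), W j + W (N+1) from
        Finset.sum_range_succ _ _]
    unfold Fj psi
    have hq : q (N+1) = W (N+1) + W N / 2 := by
      show q (N+1) = (q (N+1) - W N / 2) + W N / 2; ring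
    have h2 : phi (2*(2^(N+1)*y)) = phi (2^(N+2)*y) := pow_two_mul (N+1) y
    rw [hq, ← h2]
    ring

lemma tsum_F (y : ℝ) : ∑' j, Fj y j = Qc / 3 := by
  have hs := summable_F y
  have htend := hs.hasSum.tendsto_sum_nat
  -- partial sums over range (N+1) tend to tsum as well
  have htend1 : Filter.Tendsto (fun N : ℕ => ∑ j ∈ Finset.range (N+1), Fj y j)
      Filter.atTop (nhds (∑' j, Fj y j)) := htend.comp (Filter.tendsto_add_atTop_nat 1)
  have hWtend : Filter.Tendsto (fun N : ℕ => (∑ j ∈ Finset.range (N+1), W j)/2)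
      Filter.atTop (nhds ((∑' j, W j)/2)) := by
    have := summable_W.hasSum.tendsto_sum_nat
    exact ((this.comp (Filter.tendsto_add_atTop_nat 1)).div_const 2)
  have hW0 : Filter.Tendsto (fun N : ℕ => (W N / 2) * phi (2^(N+1)*y)) Filter.atTop (nhds 0) := by
    have hWz : Filter.Tendsto W Filter.atTop (nhds 0) := summable_W.tendsto_atTop_zero
    apply squeeze_zero (fun N => ?_) (fun N => ?_) (by simpa using (hWz.div_const 2).mul_const (1/2:ℝ))
    · exact mul_nonneg (by linarith [(W_nonneg_le N).1]) (phi_nonneg _)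
    · have h1 := phi_le_half (2^(N+1)*y)
      have h2 := (W_nonneg_le N).1
      have h3 := phi_nonneg (2^(N+1)*y)
      nlinarith
  have h2 : Filter.Tendsto (fun N : ℕ => (∑ j ∈ Finset.range (N+1), W j)/2 - (W N / 2) * phi (2^(N+1)*y))
      Filter.atTop (nhds ((∑' j, W j)/2 - 0)) := hWtend.sub hW0
  have h3 : Filter.Tendsto (fun N : ℕ => ∑ j ∈ Finset.range (N+1), Fj y j)
      Filter.atTop (nhds ((∑' j, W j)/2 - 0)) := by
    apply h2.congr
    intro N
    exact (partial_F y N).symm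
  have := tendsto_nhds_unique htend1 h3
  rw [this, tsum_W]
  ring

lemma g_le (y : ℝ) : g y ≤ Qc/3 - (7/400) * e y := by
  have hid : g y + ∑' j, W j * psi (2^j*y) = Qc/3 := by
    unfold g
    rw [← tsum_F y]
    rw [← Summable.tsum_add (summable_qphi y) (summable_Wpsi y)]
    rfl
  have hcmp : (7/400 : ℝ) * e y ≤ ∑' j, W j * psi (2^j*y) := by
    have h1 : ∀ j : ℕ, (7/400) * ((1/2:ℝ)^j * psi (2^j * y)) ≤ W j * psi (2^j*y) := by
      intro j
      have := W_ge j
      have := psi_nonneg (2^j*y)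
      nlinarith
    have h2 : (7/400 : ℝ) * ∑' j : ℕ, (1/2:ℝ)^j * psi (2^j * y) ≤ ∑' j, W j * psi (2^j*y) := by
      rw [← tsum_mul_left]
      exact Summable.tsum_le_tsum h1 ((summable_psi_geom y).mul_left _) (summable_Wpsi y)
    have h3 := e_le_S y
    nlinarith [h3, h2]
  linarith

noncomputable def cc : ℕ → ℝ := fun m => 1 / ((m : ℝ) + 1) ^ 2

lemma summable_cphi (t : ℝ) : Summable (fun m : ℕ => cc m * phi (2^m * t)) := by
  have hs : Summable cc := by
    have h : Summable (fun n : ℕ => 1/((n:ℝ))^2) :=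
      (Real.summable_one_div_nat_pow (p := 2)).mpr (by norm_num)
    have h1 := (summable_nat_add_iff (f := fun n : ℕ => 1/((n:ℝ))^2) 1).mpr h
    apply h1.congr
    intro m
    unfold cc
    push_cast
    ring_nf
  apply Summable.of_nonneg_of_le
    (fun m => mul_nonneg (by unfold cc; positivity) (phi_nonneg _))
    (fun m => ?_) hs
  have := phi_le_half (2^m*t)
  have hc : (0:ℝ) < cc m := by unfold cc; positivity
  nlinarith

lemma takagi_decomp (t : ℝ) :
    takagiF cc t = phi t + phi (2*t)/4 + phi (4*t)/9 + g (8*t) := by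
  unfold takagiF
  rw [← Summable.sum_add_tsum_nat_add 3 (summable_cphi t)]
  have h1 : ∑ m ∈ Finset.range 3, cc m * phi (2^m*t) = phi t + phi (2*t)/4 + phi (4*t)/9 := by
    rw [Finset.sum_range_succ, Finset.sum_range_succ, Finset.sum_range_one]
    unfold cc
    norm_num
    ring
  have h2 : ∑' m : ℕ, cc (m+3) * phi (2^(m+3)*t) = g (8*t) := by
    unfold g
    apply tsum_congr
    intro m
    have hc : cc (m+3) = q m := by
      unfold cc q; push_cast; ring_nf
    have hp : (2:ℝ)^(m+3)*t = 2^m*(8*t) := by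
      rw [pow_add]; ring
    rw [hc, hp]
  rw [h1, h2]

lemma orbit_third (x : ℝ) (h : ∃ n : ℤ, x = n + 1/3 ∨ x = n + 2/3) :
    ∀ m : ℕ, phi ((2:ℝ)^m * x) = 1/3 := by
  have key : ∀ m : ℕ, ∃ n : ℤ, (2:ℝ)^m * x = n + 1/3 ∨ (2:ℝ)^m * x = n + 2/3 := by
    intro m
    induction m with
    | zero => simpa using h
    | succ m ih =>
      obtain ⟨n, hn | hn⟩ := ih
      · exact ⟨2*n, Or.inr (by rw [pow_succ]; push_cast; nlinarith [hn])⟩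
      · exact ⟨2*n+1, Or.inl (by rw [pow_succ]; push_cast; nlinarith [hn])⟩
  intro m
  obtain ⟨n, hn | hn⟩ := key m
  · rw [hn, phi_eq_of_le n (by linarith) (by linarith)]
    ring
  · rw [hn, phi_eq_of_ge n (by linarith) (by linarith)]
    ring

lemma g_third (y : ℝ) (h : ∃ n : ℤ, y = n + 1/3 ∨ y = n + 2/3) : g y = Qc/3 := by
  unfold g Qc
  rw [show (∑' m, q m)/3 = ∑' m, q m * (1/3) by rw [tsum_mul_right]; ring]
  apply tsum_congr
  intro m
  rw [orbit_third y h m]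

lemma f_11 : takagiF cc (11/24) = 215/432 + Qc/3 := by
  rw [takagi_decomp]
  have h1 : phi (11/24 : ℝ) = 11/24 := by
    rw [phi_eq_of_le 0 (by norm_num) (by norm_num)]; norm_num
  have h2 : phi (2*(11/24) : ℝ) = 1/12 := by
    rw [phi_eq_of_ge 0 (by norm_num) (by norm_num)]; norm_num
  have h3 : phi (4*(11/24) : ℝ) = 1/6 := by
    rw [phi_eq_of_ge 1 (by push_cast; norm_num) (by push_cast; norm_num)]; push_cast; norm_num
  have h4 : g (8*(11/24) : ℝ) = Qc/3 := g_third _ ⟨3, Or.inr (by push_cast; norm_num)⟩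
  rw [h1, h2, h3, h4]
  ring

lemma f_13 : takagiF cc (13/24) = 215/432 + Qc/3 := by
  rw [takagi_decomp]
  have h1 : phi (13/24 : ℝ) = 11/24 := by
    rw [phi_eq_of_ge 0 (by norm_num) (by norm_num)]; norm_num
  have h2 : phi (2*(13/24) : ℝ) = 1/12 := by
    rw [phi_eq_of_le 1 (by push_cast; norm_num) (by push_cast; norm_num)]; push_cast; norm_num
  have h3 : phi (4*(13/24) : ℝ) = 1/6 := by
    rw [phi_eq_of_le 2 (by push_cast; norm_num) (by push_cast; norm_num)]; push_cast; norm_num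
  have h4 : g (8*(13/24) : ℝ) = Qc/3 := g_third _ ⟨4, Or.inl (by push_cast; norm_num)⟩
  rw [h1, h2, h3, h4]
  ring

lemma f_sym (t : ℝ) : takagiF cc (1 - t) = takagiF cc t := by
  unfold takagiF
  apply tsum_congr
  intro m
  congr 1
  have h1 : (2:ℝ)^m * (1 - t) = -(2^m * t) + ((2^m : ℤ) : ℝ) := by push_cast; ring
  rw [h1, phi_add_int, phi_neg]


lemma f_lt_half (t : ℝ) (h0 : 0 ≤ t) (h1 : t ≤ 1/2) (hn1 : t ≠ 11/24) :
    takagiF cc t < 215/432 + Qc/3 := by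
  rw [takagi_decomp]
  have hg := g_le (8*t)
  have he : e (8*t) = min (phi (8*t - (1/3:ℝ))) (phi (8*t + (1/3:ℝ))) := rfl
  have hth := theta_lt t h0 h1 hn1
  rw [he] at hg
  linarith

lemma f_lt (t : ℝ) (h0 : 0 ≤ t) (h1 : t ≤ 1) (hn1 : t ≠ 11/24) (hn2 : t ≠ 13/24) :
    takagiF cc t < 215/432 + Qc/3 := by
  rcases le_or_gt t (1/2) with h | h
  · exact f_lt_half t h0 h hn1
  · have hsym : takagiF cc t = takagiF cc (1 - t) := by
      rw [f_sym]
    rw [hsym]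
    apply f_lt_half (1 - t) (by linarith) (by linarith)
    intro hcon
    apply hn2
    linarith

theorem takagi_squared_example_maximizers :
    {t : ℝ | t ∈ Set.Icc (0 : ℝ) 1
        ∧ ∀ s ∈ Set.Icc (0 : ℝ) 1,
            takagiF (fun m => 1 / ((m : ℝ) + 1) ^ 2) s
              ≤ takagiF (fun m => 1 / ((m : ℝ) + 1) ^ 2) t}
      = {11 / 24, 13 / 24} := by
  have hcc : (fun m : ℕ => 1 / ((m : ℝ) + 1) ^ 2) = cc := rfl
  ext t
  simp only [Set.mem_setOf_eq, Set.mem_insert_iff, Set.mem_singleton_iff, Set.mem_Icc, hcc]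
  constructor
  · rintro ⟨⟨h0, h1⟩, hmax⟩
    by_contra hcon
    push_neg at hcon
    obtain ⟨hn1, hn2⟩ := hcon
    have h11 := hmax (11/24) (by constructor <;> norm_num)
    rw [f_11] at h11
    have hlt := f_lt t h0 h1 hn1 hn2
    linarith
  · intro ht
    have hb : ∀ s : ℝ, 0 ≤ s → s ≤ 1 → takagiF cc s ≤ 215/432 + Qc/3 := by
      intro s hs0 hs1
      rcases eq_or_ne s (11/24) with rfl | hn1
      · rw [f_11]
      · rcases eq_or_ne s (13/24) with rfl | hn2
        · rw [f_13]
        · exact (f_lt s hs0 hs1 hn1 hn2).le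
    rcases ht with rfl | rfl
    · refine ⟨by constructor <;> norm_num, ?_⟩
      intro s hs
      rw [f_11]
      exact hb s hs.1 hs.2
    · refine ⟨by constructor <;> norm_num, ?_⟩
      intro s hs
      rw [f_13]
      exact hb s hs.1 hs.2
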